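/- arXiv:2403.12158 — 5 statements merged into one kernel-verified Lean document; each statement's English description precedes it below -/
import Mathlib

section
/- (Theorem 1.) Let n ≥ 1 be an integer and let α, β : Fin (n+1) → ℝ satisfy α i > 0 and β i > 0 for all i. Let d_α and d_β be the Dirichlet densities with parameters α and β in the n-dimensional parametrization. Then the Kullback–Leibler divergence of d_α from d_β, namely ∫ d_α(y) · log (d_α(y) / d_β(y)) dy over T with respect to Lebesgue measure on Fin n → ℝ, equals log (Γ(∑ i, α i) / Γ(∑ i, β i)) + ∑ i, log (Γ(β i) / Γ(α i)) + ∑ i, (α i − β i) · (ψ(α i) − ψ(∑ i, α i)). -/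
open MeasureTheory Set
open scoped ENNReal

/-- The Dirichlet density with parameter `α` in the `n`-dimensional parametrization:
nonzero exactly on `T = {y | (∀ i, 0 < y i) ∧ ∑ i, y i < 1}`. -/
noncomputable def dirichletDensity (n : ℕ) (α : Fin (n + 1) → ℝ) (y : Fin n → ℝ) : ℝ :=
  open Classical in
  if (∀ i, 0 < y i) ∧ ∑ i, y i < 1 then
    (Real.Gamma (∑ i, α i) / ∏ i, Real.Gamma (α i)) *
      (∏ i : Fin n, (y i) ^ (α i.castSucc - 1)) * (1 - ∑ i, y i) ^ (α (Fin.last n) - 1)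
  else 0

/-- The digamma function. -/
noncomputable def digamma (x : ℝ) : ℝ :=
  deriv (fun t => Real.log (Real.Gamma t)) x


lemma cpow_eq_ofReal {x y : ℝ} (hx : 0 < x) :
    (x : ℂ) ^ ((y : ℂ) - 1) = ((x ^ (y - 1) : ℝ) : ℂ) := by
  rw [Complex.ofReal_cpow hx.le]; push_cast; ring_nf

lemma realBeta_integrableOn {a b : ℝ} (ha : 0 < a) (hb : 0 < b) :
    IntegrableOn (fun x => x ^ (a-1) * (1 - x) ^ (b-1)) (Ioo (0:ℝ) 1) := by
  have h := (Complex.betaIntegral_convergent (u := (a:ℂ)) (v := (b:ℂ)) (by simpa) (by simpa)).norm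
  rw [intervalIntegrable_iff_integrableOn_Ioo_of_le zero_le_one] at h
  refine h.congr_fun (fun x hx => ?_) measurableSet_Ioo
  have h1 : (0:ℝ) < 1 - x := by linarith [hx.2]
  dsimp only
  rw [norm_mul,
    Complex.norm_cpow_eq_rpow_re_of_pos hx.1, (by push_cast; ring : (1 : ℂ) - (x:ℝ) = ((1 - x : ℝ):ℂ)),
    Complex.norm_cpow_eq_rpow_re_of_pos h1]
  norm_num

lemma realBeta_value {a b : ℝ} (ha : 0 < a) (hb : 0 < b) :
    ∫ x in Ioo (0:ℝ) 1, x ^ (a-1) * (1 - x) ^ (b-1)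
      = Real.Gamma a * Real.Gamma b / Real.Gamma (a+b) := by
  have hG : Real.Gamma (a+b) ≠ 0 := (Real.Gamma_pos_of_pos (by linarith)).ne'
  have key := Complex.Gamma_mul_Gamma_eq_betaIntegral (s := (a:ℂ)) (t := (b:ℂ)) (by simpa) (by simpa)
  have hβ : Complex.betaIntegral a b = ((∫ x in Ioo (0:ℝ) 1, x ^ (a-1) * (1 - x) ^ (b-1) : ℝ) : ℂ) := by
    rw [Complex.betaIntegral, intervalIntegral.integral_of_le zero_le_one,
      integral_Ioc_eq_integral_Ioo]
    calc ∫ x in Ioo (0:ℝ) 1, (x:ℂ) ^ ((a:ℂ) - 1) * (1 - (x:ℂ)) ^ ((b:ℂ) - 1)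
        = ∫ x in Ioo (0:ℝ) 1, ((x ^ (a-1) * (1 - x) ^ (b-1) : ℝ) : ℂ) := by
          refine setIntegral_congr_fun measurableSet_Ioo fun x hx => ?_
          have h1 : (0:ℝ) < 1 - x := by linarith [hx.2]
          rw [cpow_eq_ofReal hx.1, (by push_cast; ring : (1 : ℂ) - (x:ℝ) = ((1 - x : ℝ):ℂ)),
            cpow_eq_ofReal h1]
          push_cast; ring
      _ = _ := integral_ofReal
  rw [hβ, (by push_cast; ring : (a:ℂ) + (b:ℂ) = ((a+b:ℝ):ℂ)), Complex.Gamma_ofReal,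
    Complex.Gamma_ofReal, Complex.Gamma_ofReal] at key
  have key2 : Real.Gamma a * Real.Gamma b
      = Real.Gamma (a+b) * ∫ x in Ioo (0:ℝ) 1, x ^ (a-1) * (1 - x) ^ (b-1) := by
    exact_mod_cast key
  field_simp [key2]
  linear_combination -key2

lemma realBeta_scaled_integrableOn {a b c : ℝ} (ha : 0 < a) (hb : 0 < b) (hc : 0 < c) :
    IntegrableOn (fun x => x ^ (a-1) * (c - x) ^ (b-1)) (Ioo (0:ℝ) c) := by
  have h : IntervalIntegrable (fun x => x ^ (a-1) * (1 - x) ^ (b-1)) volume 0 1 := by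
    rw [intervalIntegrable_iff_integrableOn_Ioo_of_le zero_le_one]
    exact realBeta_integrableOn ha hb
  have h2 := (h.comp_mul_left (c := c⁻¹)).const_mul (c ^ (a+b-2))
  rw [(by simp : (0:ℝ) / c⁻¹ = 0), (by field_simp : (1:ℝ) / c⁻¹ = c),
    intervalIntegrable_iff_integrableOn_Ioo_of_le hc.le] at h2
  refine h2.congr_fun (fun x hx => ?_) measurableSet_Ioo
  have hxc : (0:ℝ) < x / c := div_pos hx.1 hc
  have hxc2 : (0:ℝ) < 1 - x / c := by
    rw [sub_pos, div_lt_one hc]; exact hx.2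
  have e1 : c⁻¹ * x = x / c := by ring
  have e2 : (1 : ℝ) - x / c = (c - x) / c := by field_simp
  dsimp only
  rw [e1, e2, Real.div_rpow hx.1.le hc.le, Real.div_rpow (by linarith [hx.2] : (0:ℝ) ≤ c - x) hc.le,
    (by ring : a + b - 2 = (a-1) + (b-1)), Real.rpow_add hc]
  have g1 : c ^ (a-1) ≠ 0 := (Real.rpow_pos_of_pos hc _).ne'
  have g2 : c ^ (b-1) ≠ 0 := (Real.rpow_pos_of_pos hc _).ne'
  field_simp

lemma realBeta_scaled_value {a b c : ℝ} (ha : 0 < a) (hb : 0 < b) (hc : 0 < c) :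
    ∫ x in Ioo (0:ℝ) c, x ^ (a-1) * (c - x) ^ (b-1)
      = c ^ (a+b-1) * (Real.Gamma a * Real.Gamma b / Real.Gamma (a+b)) := by
  have key := Complex.betaIntegral_scaled (a:ℂ) (b:ℂ) hc
  have hβ : Complex.betaIntegral a b
      = ((Real.Gamma a * Real.Gamma b / Real.Gamma (a+b) : ℝ) : ℂ) := by
    rw [← realBeta_value ha hb]
    rw [Complex.betaIntegral, intervalIntegral.integral_of_le zero_le_one,
      integral_Ioc_eq_integral_Ioo]
    calc ∫ x in Ioo (0:ℝ) 1, (x:ℂ) ^ ((a:ℂ) - 1) * (1 - (x:ℂ)) ^ ((b:ℂ) - 1)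
        = ∫ x in Ioo (0:ℝ) 1, ((x ^ (a-1) * (1 - x) ^ (b-1) : ℝ) : ℂ) := by
          refine setIntegral_congr_fun measurableSet_Ioo fun x hx => ?_
          have h1 : (0:ℝ) < 1 - x := by linarith [hx.2]
          rw [cpow_eq_ofReal hx.1, (by push_cast; ring : (1 : ℂ) - (x:ℝ) = ((1 - x : ℝ):ℂ)),
            cpow_eq_ofReal h1]
          push_cast; ring
      _ = _ := integral_ofReal
  rw [intervalIntegral.integral_of_le hc.le, integral_Ioc_eq_integral_Ioo] at key
  have lhs_eq : ∫ x in Ioo (0:ℝ) c, (x:ℂ) ^ ((a:ℂ) - 1) * ((c:ℂ) - (x:ℂ)) ^ ((b:ℂ) - 1)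
      = ((∫ x in Ioo (0:ℝ) c, x ^ (a-1) * (c - x) ^ (b-1) : ℝ) : ℂ) := by
    calc ∫ x in Ioo (0:ℝ) c, (x:ℂ) ^ ((a:ℂ) - 1) * ((c:ℂ) - (x:ℂ)) ^ ((b:ℂ) - 1)
        = ∫ x in Ioo (0:ℝ) c, ((x ^ (a-1) * (c - x) ^ (b-1) : ℝ) : ℂ) := by
          refine setIntegral_congr_fun measurableSet_Ioo fun x hx => ?_
          have h1 : (0:ℝ) < c - x := by linarith [hx.2]
          rw [cpow_eq_ofReal hx.1, (by push_cast; ring : (c : ℂ) - (x:ℝ) = ((c - x : ℝ):ℂ)),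
            cpow_eq_ofReal h1]
          push_cast; ring
      _ = _ := integral_ofReal
  have hcpow : (c:ℂ) ^ ((a:ℂ) + (b:ℂ) - 1) = ((c ^ (a+b-1) : ℝ) : ℂ) := by
    rw [(by push_cast; ring : (a:ℂ) + (b:ℂ) = ((a+b:ℝ):ℂ))]
    exact cpow_eq_ofReal hc
  rw [lhs_eq, hβ, hcpow, ← Complex.ofReal_mul] at key
  exact_mod_cast key

def dSet (n : ℕ) : Set (Fin n → ℝ) := {y | (∀ i, 0 < y i) ∧ ∑ i, y i < 1}

lemma measurableSet_dSet (n : ℕ) : MeasurableSet (dSet n) := by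
  have h1 : MeasurableSet {y : Fin n → ℝ | ∀ i, 0 < y i} := by
    rw [Set.setOf_forall]
    exact MeasurableSet.iInter fun i => measurableSet_lt measurable_const (measurable_pi_apply i)
  have h2 : MeasurableSet {y : Fin n → ℝ | ∑ i, y i < 1} :=
    measurableSet_lt (Finset.measurable_sum _ fun i _ => measurable_pi_apply i) measurable_const
  exact h1.inter h2

noncomputable def dKer (n : ℕ) (α : Fin (n+1) → ℝ) (y : Fin n → ℝ) : ℝ :=
  (∏ i : Fin n, y i ^ (α i.castSucc - 1)) * (1 - ∑ i, y i) ^ (α (Fin.last n) - 1)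

lemma measurable_dKer (n : ℕ) (α : Fin (n+1) → ℝ) : Measurable (dKer n α) := by
  apply Measurable.mul
  · exact Finset.measurable_prod _ fun i _ => (measurable_pi_apply i).pow measurable_const
  · exact (measurable_const.sub (Finset.measurable_sum _ fun i _ => measurable_pi_apply i)).pow
      measurable_const

lemma dKer_pos {n : ℕ} (α : Fin (n+1) → ℝ) {y : Fin n → ℝ} (hy : y ∈ dSet n) :
    0 < dKer n α y := by
  refine mul_pos (Finset.prod_pos fun i _ => Real.rpow_pos_of_pos (hy.1 i) _) ?_
  exact Real.rpow_pos_of_pos (by linarith [hy.2]) _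

lemma cons_mem_dSet_iff {n : ℕ} (t : ℝ) (z : Fin n → ℝ) :
    (Fin.cons t z ∈ dSet (n+1)) ↔ ((0 < t ∧ ∀ i, 0 < z i) ∧ t + ∑ i, z i < 1) := by
  simp [dSet, Fin.forall_fin_succ]

lemma dKer_cons {n : ℕ} (α : Fin (n+2) → ℝ) (t : ℝ) (z : Fin n → ℝ) :
    dKer (n+1) α (Fin.cons t z)
      = (∏ i, z i ^ (α i.succ.castSucc - 1))
          * (t ^ (α 0 - 1) * (1 - (t + ∑ i, z i)) ^ (α (Fin.last (n+1)) - 1)) := by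
  unfold dKer
  rw [Fin.prod_univ_succ, Fin.sum_cons]
  simp only [Fin.cons_zero, Fin.cons_succ, Fin.castSucc_zero]
  ring

lemma dKer_lintegral : ∀ (n : ℕ) (α : Fin (n+1) → ℝ), (∀ i, 0 < α i) →
    ∫⁻ y in dSet n, ENNReal.ofReal (dKer n α y)
      = ENNReal.ofReal ((∏ i, Real.Gamma (α i)) / Real.Gamma (∑ i, α i)) := by
  intro n
  induction n with
  | zero =>
    intro α hα
    have hset : dSet 0 = Set.univ := by
      ext y; simp [dSet]
    have hker : ∀ y : Fin 0 → ℝ, dKer 0 α y = 1 := by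
      intro y; simp [dKer]
    have hvol : (volume : Measure (Fin 0 → ℝ)) Set.univ = 1 := by
      simp [volume_pi, Measure.pi_univ]
    rw [hset, Measure.restrict_univ]
    simp only [hker]
    rw [lintegral_const, hvol, mul_one]
    rw [Fin.prod_univ_one, Fin.sum_univ_one, div_self (Real.Gamma_pos_of_pos (hα 0)).ne']
  | succ n ih =>
    intro α hα
    have hBpos : 0 < Real.Gamma (α 0) * Real.Gamma (α (Fin.last (n+1)))
        / Real.Gamma (α 0 + α (Fin.last (n+1))) :=
      div_pos (mul_pos (Real.Gamma_pos_of_pos (hα 0)) (Real.Gamma_pos_of_pos (hα _)))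
        (Real.Gamma_pos_of_pos (add_pos (hα 0) (hα _)))
    set B : ℝ := Real.Gamma (α 0) * Real.Gamma (α (Fin.last (n+1)))
        / Real.Gamma (α 0 + α (Fin.last (n+1))) with hB
    set α' : Fin (n+1) → ℝ :=
      Fin.snoc (fun i : Fin n => α i.succ.castSucc) (α 0 + α (Fin.last (n+1))) with hα'def
    have hα'cast : ∀ j : Fin n, α' j.castSucc = α j.succ.castSucc := fun j => by
      simp [hα'def, Fin.snoc_castSucc]
    have hα'last : α' (Fin.last n) = α 0 + α (Fin.last (n+1)) := by
      simp [hα'def, Fin.snoc_last]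
    have hα'pos : ∀ i, 0 < α' i := by
      intro i
      induction i using Fin.lastCases with
      | last => rw [hα'last]; exact add_pos (hα 0) (hα _)
      | cast j => rw [hα'cast]; exact hα _
    set F : (Fin (n+1) → ℝ) → ℝ≥0∞ :=
      (dSet (n+1)).indicator (fun y => ENNReal.ofReal (dKer (n+1) α y)) with hFdef
    have hFmeas : Measurable F :=
      ((measurable_dKer _ _).ennreal_ofReal).indicator (measurableSet_dSet _)
    set e : (Fin (n+1) → ℝ) ≃ᵐ ℝ × (Fin n → ℝ) :=
      MeasurableEquiv.piFinSuccAbove (fun _ : Fin (n+1) => ℝ) 0 with he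
    have hes : ∀ (t : ℝ) (z : Fin n → ℝ), e.symm (t, z) = Fin.cons t z := by
      intro t z
      rw [he]
      simp [MeasurableEquiv.piFinSuccAbove_symm_apply, Fin.insertNth_zero', Fin.consEquiv]
    have step1 : ∫⁻ y in dSet (n+1), ENNReal.ofReal (dKer (n+1) α y) = ∫⁻ y, F y := by
      rw [hFdef, lintegral_indicator (measurableSet_dSet _) _]
    have hmp : MeasurePreserving e.symm (volume : Measure (ℝ × (Fin n → ℝ))) volume :=
      (volume_preserving_piFinSuccAbove (fun _ : Fin (n+1) => ℝ) 0).symm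
    have step2 : ∫⁻ y, F y = ∫⁻ p : ℝ × (Fin n → ℝ), F (e.symm p) :=
      (hmp.lintegral_comp hFmeas).symm
    have step3 : ∫⁻ p : ℝ × (Fin n → ℝ), F (e.symm p)
        = ∫⁻ z : Fin n → ℝ, ∫⁻ t : ℝ, F (e.symm (t, z)) := by
      rw [Measure.volume_eq_prod]
      exact lintegral_prod_symm' _ (hFmeas.comp e.symm.measurable)
    have inner : ∀ z : Fin n → ℝ, (∫⁻ t : ℝ, F (e.symm (t, z)))
        = (dSet n).indicator (fun z => ENNReal.ofReal B * ENNReal.ofReal (dKer n α' z)) z := by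
      intro z
      by_cases hz : z ∈ dSet n
      · have hzpos := hz.1
        have hzsum := hz.2
        have hc0 : (0:ℝ) < 1 - ∑ i, z i := by linarith
        set c : ℝ := 1 - ∑ i, z i with hc
        have hCpos : (0:ℝ) < ∏ i, z i ^ (α i.succ.castSucc - 1) :=
          Finset.prod_pos fun i _ => Real.rpow_pos_of_pos (hzpos i) _
        set C : ℝ := ∏ i, z i ^ (α i.succ.castSucc - 1) with hC
        have hFc : ∀ t : ℝ, F (e.symm (t, z)) = (Ioo (0:ℝ) c).indicator
            (fun t => ENNReal.ofReal
              (C * (t ^ (α 0 - 1) * (c - t) ^ (α (Fin.last (n+1)) - 1)))) t := by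
          intro t
          rw [hes, hFdef]
          by_cases ht : t ∈ Ioo (0:ℝ) c
          · rw [Set.indicator_of_mem ht, Set.indicator_of_mem]
            · rw [dKer_cons]
              have h1 : 1 - (t + ∑ i, z i) = c - t := by rw [hc]; ring
              rw [h1]
            · rw [cons_mem_dSet_iff]
              have ht2 := ht.2
              rw [hc] at ht2
              exact ⟨⟨ht.1, hzpos⟩, by linarith⟩
          · rw [Set.indicator_of_notMem ht, Set.indicator_of_notMem]
            rw [cons_mem_dSet_iff]
            rintro ⟨⟨ht1, -⟩, ht2⟩
            exact ht ⟨ht1, by rw [hc]; linarith⟩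
        rw [Set.indicator_of_mem hz]
        have hmeas1 : Measurable fun t : ℝ =>
            ENNReal.ofReal (t ^ (α 0 - 1) * (c - t) ^ (α (Fin.last (n+1)) - 1)) :=
          ((measurable_id.pow measurable_const).mul
            ((measurable_const.sub measurable_id).pow measurable_const)).ennreal_ofReal
        calc ∫⁻ t, F (e.symm (t, z))
            = ∫⁻ t in Ioo (0:ℝ) c, ENNReal.ofReal
                (C * (t ^ (α 0 - 1) * (c - t) ^ (α (Fin.last (n+1)) - 1))) := by
              simp_rw [hFc]
              exact lintegral_indicator measurableSet_Ioo _
          _ = ENNReal.ofReal C * ∫⁻ t in Ioo (0:ℝ) c, ENNReal.ofReal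
                (t ^ (α 0 - 1) * (c - t) ^ (α (Fin.last (n+1)) - 1)) := by
              simp_rw [ENNReal.ofReal_mul hCpos.le]
              exact lintegral_const_mul _ hmeas1
          _ = ENNReal.ofReal C * ENNReal.ofReal (c ^ (α 0 + α (Fin.last (n+1)) - 1)
                * (Real.Gamma (α 0) * Real.Gamma (α (Fin.last (n+1)))
                  / Real.Gamma (α 0 + α (Fin.last (n+1))))) := by
              congr 1
              rw [← ofReal_integral_eq_lintegral_ofReal
                (realBeta_scaled_integrableOn (hα 0) (hα _) hc0) ?_,
                realBeta_scaled_value (hα 0) (hα _) hc0]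
              filter_upwards [ae_restrict_mem measurableSet_Ioo] with t ht
              exact mul_nonneg (Real.rpow_nonneg ht.1.le _)
                (Real.rpow_nonneg (by linarith [ht.2] : (0:ℝ) ≤ c - t) _)
          _ = ENNReal.ofReal B * ENNReal.ofReal (dKer n α' z) := by
              rw [← ENNReal.ofReal_mul hCpos.le, ← ENNReal.ofReal_mul hBpos.le]
              congr 1
              have hd : dKer n α' z = C * c ^ (α 0 + α (Fin.last (n+1)) - 1) := by
                unfold dKer
                rw [hC, hc, hα'last]
                congr 1
                exact Finset.prod_congr rfl fun i _ => by rw [hα'cast]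
              rw [hd, hB]; ring
      · rw [Set.indicator_of_notMem hz]
        have hzero : ∀ t : ℝ, F (e.symm (t, z)) = 0 := by
          intro t
          rw [hes, hFdef, Set.indicator_of_notMem]
          rw [cons_mem_dSet_iff]
          rintro ⟨⟨ht, hzp⟩, hsum⟩
          refine hz ⟨hzp, ?_⟩
          have : (0:ℝ) < t := ht
          linarith
        simp [hzero]
    rw [step1, step2, step3]
    simp_rw [inner]
    rw [lintegral_indicator (measurableSet_dSet n) _,
      lintegral_const_mul _ ((measurable_dKer _ _).ennreal_ofReal), ih α' hα'pos,
      ← ENNReal.ofReal_mul hBpos.le]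
    congr 1
    have hsum' : ∑ j, α' j = ∑ j, α j := by
      rw [Fin.sum_univ_castSucc (f := α'), Fin.sum_univ_succ (f := α),
        Fin.sum_univ_castSucc (f := fun i : Fin (n+1) => α i.succ)]
      simp only [hα'cast, hα'last, Fin.succ_castSucc, Fin.succ_last]
      ring
    have h1 : Real.Gamma (α 0 + α (Fin.last (n+1))) ≠ 0 :=
      (Real.Gamma_pos_of_pos (add_pos (hα 0) (hα _))).ne'
    have h2 : Real.Gamma (∑ j, α j) ≠ 0 :=
      (Real.Gamma_pos_of_pos (Finset.sum_pos (fun j _ => hα j) Finset.univ_nonempty)).ne'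
    rw [hsum']
    rw [Fin.prod_univ_castSucc (f := fun j => Real.Gamma (α' j)),
      Fin.prod_univ_succ (f := fun j => Real.Gamma (α j)),
      Fin.prod_univ_castSucc (f := fun i : Fin (n+1) => Real.Gamma (α i.succ))]
    simp only [hα'cast, hα'last, Fin.succ_castSucc, Fin.succ_last]
    rw [hB]
    field_simp

lemma dKer_nonneg_ae {n : ℕ} (α : Fin (n+1) → ℝ) :
    0 ≤ᵐ[volume.restrict (dSet n)] dKer n α := by
  filter_upwards [ae_restrict_mem (measurableSet_dSet n)] with y hy
  exact (dKer_pos α hy).le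

lemma dKer_integrableOn {n : ℕ} {α : Fin (n+1) → ℝ} (hα : ∀ i, 0 < α i) :
    IntegrableOn (dKer n α) (dSet n) := by
  refine ⟨(measurable_dKer n α).aestronglyMeasurable, ?_⟩
  rw [hasFiniteIntegral_iff_ofReal (dKer_nonneg_ae α)]
  rw [dKer_lintegral n α hα]
  exact ENNReal.ofReal_lt_top

lemma dKer_integral {n : ℕ} {α : Fin (n+1) → ℝ} (hα : ∀ i, 0 < α i) :
    ∫ y in dSet n, dKer n α y = (∏ i, Real.Gamma (α i)) / Real.Gamma (∑ i, α i) := by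
  rw [integral_eq_lintegral_of_nonneg_ae (dKer_nonneg_ae α)
    (measurable_dKer n α).aestronglyMeasurable, dKer_lintegral n α hα,
    ENNReal.toReal_ofReal]
  exact div_nonneg (Finset.prod_nonneg fun i _ => (Real.Gamma_pos_of_pos (hα i)).le)
    (Real.Gamma_pos_of_pos (Finset.sum_pos (fun i _ => hα i) Finset.univ_nonempty)).le

lemma Gamma_ne_neg_nat {x : ℝ} (hx : 0 < x) : ∀ m : ℕ, x ≠ -m := by
  intro m h
  have : (0:ℝ) ≤ m := Nat.cast_nonneg m
  rw [h] at hx; linarith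

lemma digamma_eq {x : ℝ} (hx : 0 < x) :
    digamma x = deriv Real.Gamma x / Real.Gamma x := by
  have hΓpos := Real.Gamma_pos_of_pos hx
  have hΓ : DifferentiableAt ℝ Real.Gamma x := Real.differentiableAt_Gamma (Gamma_ne_neg_nat hx)
  have h := (Real.hasDerivAt_log hΓpos.ne').comp x hΓ.hasDerivAt
  rw [digamma, show (fun t => Real.log (Real.Gamma t)) = Real.log ∘ Real.Gamma from rfl, h.deriv]
  field_simp [mul_comm]

/-- unit vector in direction `j`. -/
noncomputable def ePt {n : ℕ} (j : Fin (n+1)) : Fin (n+1) → ℝ := Pi.single j 1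

lemma ePt_same {n : ℕ} (j : Fin (n+1)) : ePt j j = 1 := Pi.single_eq_same j 1

lemma ePt_ne {n : ℕ} {i j : Fin (n+1)} (h : i ≠ j) : ePt j i = 0 :=
  Pi.single_eq_of_ne h 1

/-- The coordinate functions (including the implicit last one) on the simplex. -/
noncomputable def dW (n : ℕ) (j : Fin (n+1)) (y : Fin n → ℝ) : ℝ :=
  Fin.lastCases (1 - ∑ i, y i) (fun i : Fin n => y i) j

lemma dW_castSucc {n : ℕ} (i : Fin n) (y : Fin n → ℝ) : dW n i.castSucc y = y i := by
  simp [dW]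

lemma dW_last {n : ℕ} (y : Fin n → ℝ) : dW n (Fin.last n) y = 1 - ∑ i, y i := by
  simp [dW]

lemma measurable_dW (n : ℕ) (j : Fin (n+1)) : Measurable (dW n j) := by
  induction j using Fin.lastCases with
  | last =>
    rw [show dW n (Fin.last n) = fun y => 1 - ∑ i, y i from funext dW_last]
    exact measurable_const.sub (Finset.measurable_sum _ fun i _ => measurable_pi_apply i)
  | cast i =>
    rw [show dW n i.castSucc = fun y => y i from funext (dW_castSucc i)]
    exact measurable_pi_apply i

lemma dW_pos {n : ℕ} (j : Fin (n+1)) {y : Fin n → ℝ} (hy : y ∈ dSet n) : 0 < dW n j y := by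
  induction j using Fin.lastCases with
  | last => rw [dW_last]; linarith [hy.2]
  | cast i => rw [dW_castSucc]; exact hy.1 i

lemma dW_lt_one {n : ℕ} (hn : 1 ≤ n) (j : Fin (n+1)) {y : Fin n → ℝ} (hy : y ∈ dSet n) :
    dW n j y < 1 := by
  induction j using Fin.lastCases with
  | last =>
    rw [dW_last]
    have : (0:ℝ) < ∑ i, y i := by
      have : Nonempty (Fin n) := Fin.pos_iff_nonempty.mp hn
      exact Finset.sum_pos (fun i _ => hy.1 i) Finset.univ_nonempty
    linarith
  | cast i =>
    rw [dW_castSucc]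
    have h1 : y i ≤ ∑ k, y k :=
      Finset.single_le_sum (fun k _ => (hy.1 k).le) (Finset.mem_univ i)
    linarith [hy.2]

lemma dKer_perturb {n : ℕ} (α : Fin (n+1) → ℝ) (j : Fin (n+1)) (t : ℝ)
    {y : Fin n → ℝ} (hy : y ∈ dSet n) :
    dKer n (α + t • ePt j) y = dKer n α y * dW n j y ^ t := by
  induction j using Fin.lastCases with
  | last =>
    unfold dKer
    rw [dW_last]
    have h1 : ∀ i : Fin n, (α + t • ePt (Fin.last n)) i.castSucc = α i.castSucc := by
      intro i
      simp [ePt_ne (Fin.castSucc_lt_last i).ne]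
    have h2 : (α + t • ePt (Fin.last n)) (Fin.last n) = α (Fin.last n) + t := by
      simp [ePt_same]
    simp_rw [h1, h2]
    rw [show α (Fin.last n) + t - 1 = (α (Fin.last n) - 1) + t by ring,
      Real.rpow_add (by linarith [hy.2] : (0:ℝ) < 1 - ∑ i, y i)]
    ring
  | cast k =>
    unfold dKer
    rw [dW_castSucc]
    have h2 : (α + t • ePt k.castSucc) (Fin.last n) = α (Fin.last n) := by
      simp [ePt_ne (Fin.castSucc_lt_last k).ne']
    have h1 : ∀ i : Fin n, (α + t • ePt k.castSucc) i.castSucc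
        = α i.castSucc + t * (if i = k then 1 else 0) := by
      intro i
      by_cases h : i = k
      · subst h; simp [ePt_same]
      · have hne : i.castSucc ≠ k.castSucc := fun hc => h (Fin.castSucc_injective n hc)
        simp [ePt_ne hne, h]
    simp_rw [h1, h2]
    have h3 : ∀ i : Fin n, y i ^ (α i.castSucc + t * (if i = k then 1 else 0) - 1)
        = y i ^ (α i.castSucc - 1) * y i ^ (t * (if i = k then 1 else 0)) := by
      intro i
      rw [← Real.rpow_add (hy.1 i)]
      ring_nf
    simp_rw [h3]
    rw [Finset.prod_mul_distrib]
    have h4 : (∏ i, y i ^ (t * (if i = k then 1 else 0))) = y k ^ t := by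
      rw [Finset.prod_eq_single k]
      · simp
      · intro i _ hik; simp [hik]
      · simp
    rw [h4]; ring

lemma abs_log_le_rpow {w δ : ℝ} (hw : 0 < w) (hw1 : w ≤ 1) (hδ : 0 < δ) :
    |Real.log w| ≤ δ⁻¹ * w ^ (-δ) := by
  rw [abs_of_nonpos (Real.log_nonpos hw.le hw1)]
  have h1 : Real.log (w ^ (-δ)) ≤ w ^ (-δ) - 1 :=
    Real.log_le_sub_one_of_pos (Real.rpow_pos_of_pos hw _)
  rw [Real.log_rpow hw] at h1
  have h2 : -δ * Real.log w ≤ w ^ (-δ) := by linarith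
  have h3 : -Real.log w = δ⁻¹ * (-δ * Real.log w) := by field_simp
  rw [h3]
  exact mul_le_mul_of_nonneg_left h2 (inv_pos.2 hδ).le

lemma perturb_sum {n : ℕ} (α : Fin (n+1) → ℝ) (j : Fin (n+1)) (t : ℝ) :
    ∑ i, (α + t • ePt j) i = (∑ i, α i) + t := by
  simp only [Pi.add_apply, Pi.smul_apply, smul_eq_mul]
  rw [Finset.sum_add_distrib]
  congr 1
  rw [Finset.sum_eq_single j]
  · simp [ePt_same]
  · intro i _ hij; simp [ePt_ne hij]
  · simp

lemma perturb_prod {n : ℕ} (α : Fin (n+1) → ℝ) (j : Fin (n+1)) (t : ℝ) :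
    ∏ i, Real.Gamma ((α + t • ePt j) i)
      = Real.Gamma (α j + t) * ∏ i ∈ Finset.univ.erase j, Real.Gamma (α i) := by
  rw [← Finset.mul_prod_erase Finset.univ _ (Finset.mem_univ j)]
  congr 1
  · simp [ePt_same]
  · refine Finset.prod_congr rfl fun i hi => ?_
    rw [Pi.add_apply, Pi.smul_apply, ePt_ne (Finset.ne_of_mem_erase hi), smul_zero, add_zero]

lemma perturb_pos {n : ℕ} {α : Fin (n+1) → ℝ} (hα : ∀ i, 0 < α i) {j : Fin (n+1)} {t : ℝ}
    (ht : -(α j) < t) : ∀ i, 0 < (α + t • ePt j) i := by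
  intro i
  by_cases h : i = j
  · subst h
    simp only [Pi.add_apply, Pi.smul_apply, ePt_same, smul_eq_mul, mul_one]
    linarith
  · simp only [Pi.add_apply, Pi.smul_apply, ePt_ne h, smul_zero, add_zero]
    exact hα i

lemma dKer_log_integral {n : ℕ} (hn : 1 ≤ n) {α : Fin (n+1) → ℝ} (hα : ∀ i, 0 < α i)
    (j : Fin (n+1)) :
    IntegrableOn (fun y => Real.log (dW n j y) * dKer n α y) (dSet n) ∧
    ∫ y in dSet n, Real.log (dW n j y) * dKer n α y
      = ((∏ i, Real.Gamma (α i)) / Real.Gamma (∑ i, α i))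
        * (digamma (α j) - digamma (∑ i, α i)) := by
  have hδpos : 0 < α j / 4 := by have := hα j; linarith
  set δ : ℝ := α j / 4 with hδ
  set μ := volume.restrict (dSet n) with hμ
  set F : ℝ → (Fin n → ℝ) → ℝ := fun t y => dKer n (α + t • ePt j) y with hF
  set F' : ℝ → (Fin n → ℝ) → ℝ :=
    fun t y => Real.log (dW n j y) * dKer n (α + t • ePt j) y with hF'
  set bound : (Fin n → ℝ) → ℝ := fun y => δ⁻¹ * dKer n (α + (-(2*δ)) • ePt j) y with hbd
  have h0 : α + (0:ℝ) • ePt j = α := by funext i; simp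
  have hδαj : δ < α j := by rw [hδ]; linarith [hα j]
  have hF_meas : ∀ᶠ t in nhds (0:ℝ), AEStronglyMeasurable (F t) μ :=
    Filter.Eventually.of_forall fun t => (measurable_dKer _ _).aestronglyMeasurable
  have hF_int : Integrable (F 0) μ := by
    have := dKer_integrableOn hα
    rw [hμ]
    simp only [hF, h0]
    exact this
  have hF'_meas : AEStronglyMeasurable (F' 0) μ :=
    (((measurable_dW n j).log).mul (measurable_dKer _ _)).aestronglyMeasurable
  have h_bound : ∀ᵐ y ∂μ, ∀ t ∈ Metric.ball (0:ℝ) δ, ‖F' t y‖ ≤ bound y := by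
    rw [hμ]
    filter_upwards [ae_restrict_mem (measurableSet_dSet n)] with y hy
    intro t ht
    rw [Metric.mem_ball, Real.dist_eq, sub_zero] at ht
    obtain ⟨ht1, ht2⟩ := abs_lt.1 ht
    have hw := dW_pos j hy
    have hw1 := dW_lt_one hn j hy
    have hK := dKer_pos α hy
    have e1 : ‖F' t y‖ = |Real.log (dW n j y)| * (dKer n α y * dW n j y ^ t) := by
      simp only [hF']
      rw [dKer_perturb α j t hy, Real.norm_eq_abs, abs_mul,
        abs_of_nonneg (mul_nonneg hK.le (Real.rpow_pos_of_pos hw t).le)]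
    have e2 : dW n j y ^ t ≤ dW n j y ^ (-δ) :=
      Real.rpow_le_rpow_of_exponent_ge hw hw1.le (by linarith)
    have e3 := abs_log_le_rpow hw hw1.le hδpos
    calc ‖F' t y‖ = |Real.log (dW n j y)| * (dKer n α y * dW n j y ^ t) := e1
      _ ≤ (δ⁻¹ * dW n j y ^ (-δ)) * (dKer n α y * dW n j y ^ (-δ)) :=
          mul_le_mul e3 (mul_le_mul_of_nonneg_left e2 hK.le)
            (mul_nonneg hK.le (Real.rpow_nonneg hw.le _))
            (mul_nonneg (inv_pos.2 hδpos).le (Real.rpow_nonneg hw.le _))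
      _ = δ⁻¹ * (dKer n α y * (dW n j y ^ (-δ) * dW n j y ^ (-δ))) := by ring
      _ = δ⁻¹ * (dKer n α y * dW n j y ^ (-(2*δ))) := by
          rw [← Real.rpow_add hw, show -δ + -δ = -(2*δ) by ring]
      _ = bound y := by
          simp only [hbd]
          rw [dKer_perturb α j _ hy]
  have hbpos : ∀ i, 0 < (α + (-(2*δ)) • ePt j) i :=
    perturb_pos hα (by rw [hδ]; linarith [hα j])
  have bound_int : Integrable bound μ := by
    rw [hbd, hμ]
    exact (dKer_integrableOn hbpos).const_mul δ⁻¹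
  have h_diff : ∀ᵐ y ∂μ, ∀ t ∈ Metric.ball (0:ℝ) δ, HasDerivAt (F · y) (F' t y) t := by
    rw [hμ]
    filter_upwards [ae_restrict_mem (measurableSet_dSet n)] with y hy
    intro t _
    have hw := dW_pos j hy
    have heq : (fun s : ℝ => dW n j y ^ s) = fun s => Real.exp (Real.log (dW n j y) * s) := by
      funext s; rw [Real.rpow_def_of_pos hw]
    have hrpow : HasDerivAt (fun s : ℝ => dW n j y ^ s)
        (Real.log (dW n j y) * dW n j y ^ t) t := by
      rw [heq, Real.rpow_def_of_pos hw,
        mul_comm (Real.log (dW n j y)) (Real.exp (Real.log (dW n j y) * t))]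
      have := (Real.hasDerivAt_exp (Real.log (dW n j y) * t)).comp t
        ((hasDerivAt_id t).const_mul (Real.log (dW n j y)))
      simpa [Function.comp_def] using this
    have hD : HasDerivAt (fun s : ℝ => dKer n α y * dW n j y ^ s)
        (dKer n α y * (Real.log (dW n j y) * dW n j y ^ t)) t := hrpow.const_mul _
    have hval : F' t y = dKer n α y * (Real.log (dW n j y) * dW n j y ^ t) := by
      simp only [hF']
      rw [dKer_perturb α j t hy]; ring
    rw [hval]
    refine hD.congr_of_eventuallyEq ?_
    exact Filter.Eventually.of_forall fun s => dKer_perturb α j s hy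
  obtain ⟨hint, hder⟩ := hasDerivAt_integral_of_dominated_loc_of_deriv_le (Metric.ball_mem_nhds 0 hδpos)
    hF_meas hF_int hF'_meas h_bound bound_int h_diff
  -- the closed form on a neighborhood of 0
  have hSpos : 0 < ∑ i, α i := Finset.sum_pos (fun i _ => hα i) Finset.univ_nonempty
  have hΓS : Real.Gamma (∑ i, α i) ≠ 0 := (Real.Gamma_pos_of_pos hSpos).ne'
  have hΓj : Real.Gamma (α j) ≠ 0 := (Real.Gamma_pos_of_pos (hα j)).ne'
  set Pj : ℝ := ∏ i ∈ Finset.univ.erase j, Real.Gamma (α i) with hPj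
  have hev : (fun t => ∫ y, F t y ∂μ)
      =ᶠ[nhds (0:ℝ)] fun t => Real.Gamma (α j + t) * Pj / Real.Gamma ((∑ i, α i) + t) := by
    filter_upwards [Metric.ball_mem_nhds (0:ℝ) hδpos] with t ht
    rw [Metric.mem_ball, Real.dist_eq, sub_zero] at ht
    obtain ⟨ht1, ht2⟩ := abs_lt.1 ht
    have hpos : ∀ i, 0 < (α + t • ePt j) i := perturb_pos hα (by linarith)
    simp only [hF]
    rw [hμ, dKer_integral hpos, perturb_prod, perturb_sum]
  have h1 : HasDerivAt (fun t : ℝ => Real.Gamma (α j + t)) (deriv Real.Gamma (α j)) 0 := by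
    refine HasDerivAt.comp_const_add (α j) 0 ?_
    rw [add_zero]
    exact (Real.differentiableAt_Gamma (Gamma_ne_neg_nat (hα j))).hasDerivAt
  have h2 : HasDerivAt (fun t : ℝ => Real.Gamma ((∑ i, α i) + t))
      (deriv Real.Gamma (∑ i, α i)) 0 := by
    refine HasDerivAt.comp_const_add (∑ i, α i) 0 ?_
    rw [add_zero]
    exact (Real.differentiableAt_Gamma (Gamma_ne_neg_nat hSpos)).hasDerivAt
  have hDΦ := (h1.mul_const Pj).div h2 (by simpa using hΓS)
  simp only [add_zero] at hDΦ
  have huniq : ∫ y, F' 0 y ∂μ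
      = (deriv Real.Gamma (α j) * Pj * Real.Gamma (∑ i, α i)
          - Real.Gamma (α j) * Pj * deriv Real.Gamma (∑ i, α i)) / Real.Gamma (∑ i, α i) ^ 2 := by
    refine hder.unique ?_
    refine (HasDerivAt.congr_of_eventuallyEq ?_ hev)
    convert hDΦ using 1
    all_goals rfl
  have hF'0 : F' 0 = fun y => Real.log (dW n j y) * dKer n α y := by
    funext y; simp only [hF', h0]
  rw [hF'0] at hint huniq
  refine ⟨hint, ?_⟩
  rw [hμ] at huniq
  rw [huniq, digamma_eq (hα j), digamma_eq hSpos,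
    ← Finset.mul_prod_erase Finset.univ _ (Finset.mem_univ j), ← hPj]
  field_simp

lemma log_dKer {n : ℕ} (α : Fin (n+1) → ℝ) {y : Fin n → ℝ} (hy : y ∈ dSet n) :
    Real.log (dKer n α y) = ∑ j, (α j - 1) * Real.log (dW n j y) := by
  have hs : (0:ℝ) < 1 - ∑ i, y i := by linarith [hy.2]
  unfold dKer
  rw [Real.log_mul (Finset.prod_ne_zero_iff.2
      fun i _ => (Real.rpow_pos_of_pos (hy.1 i) _).ne')
      (Real.rpow_pos_of_pos hs _).ne',
    Real.log_prod (fun i _ => (Real.rpow_pos_of_pos (hy.1 i) _).ne'),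
    Real.log_rpow hs]
  rw [Fin.sum_univ_castSucc (f := fun j => (α j - 1) * Real.log (dW n j y))]
  simp only [dW_castSucc, dW_last]
  congr 1
  refine Finset.sum_congr rfl fun i _ => ?_
  rw [Real.log_rpow (hy.1 i)]

lemma dirichletDensity_eq {n : ℕ} (α : Fin (n+1) → ℝ) {y : Fin n → ℝ} (hy : y ∈ dSet n) :
    dirichletDensity n α y
      = (Real.Gamma (∑ i, α i) / ∏ i, Real.Gamma (α i)) * dKer n α y := by
  have hy' : (∀ i, 0 < y i) ∧ ∑ i, y i < 1 := hy
  rw [dirichletDensity, if_pos hy', dKer, mul_assoc]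

/-- Theorem 1: closed form for the Kullback–Leibler divergence between two
Dirichlet distributions. -/
theorem dirichlet_kl_divergence (n : ℕ) (hn : 1 ≤ n) (α β : Fin (n + 1) → ℝ)
    (hα : ∀ i, 0 < α i) (hβ : ∀ i, 0 < β i) :
    ∫ y in {y : Fin n → ℝ | (∀ i, 0 < y i) ∧ ∑ i, y i < 1},
        dirichletDensity n α y * Real.log (dirichletDensity n α y / dirichletDensity n β y)
      = Real.log (Real.Gamma (∑ i, α i) / Real.Gamma (∑ i, β i))
        + ∑ i, Real.log (Real.Gamma (β i) / Real.Gamma (α i))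
        + ∑ i, (α i - β i) * (digamma (α i) - digamma (∑ i, α i)) := by
  have hTd : {y : Fin n → ℝ | (∀ i, 0 < y i) ∧ ∑ i, y i < 1} = dSet n := rfl
  have hSα : 0 < ∑ i, α i := Finset.sum_pos (fun i _ => hα i) Finset.univ_nonempty
  have hSβ : 0 < ∑ i, β i := Finset.sum_pos (fun i _ => hβ i) Finset.univ_nonempty
  have hΓSα : 0 < Real.Gamma (∑ i, α i) := Real.Gamma_pos_of_pos hSα
  have hΓSβ : 0 < Real.Gamma (∑ i, β i) := Real.Gamma_pos_of_pos hSβ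
  have hPα : 0 < ∏ i, Real.Gamma (α i) :=
    Finset.prod_pos fun i _ => Real.Gamma_pos_of_pos (hα i)
  have hPβ : 0 < ∏ i, Real.Gamma (β i) :=
    Finset.prod_pos fun i _ => Real.Gamma_pos_of_pos (hβ i)
  set Cα : ℝ := Real.Gamma (∑ i, α i) / ∏ i, Real.Gamma (α i) with hCα
  set Cβ : ℝ := Real.Gamma (∑ i, β i) / ∏ i, Real.Gamma (β i) with hCβ
  have hCαpos : 0 < Cα := div_pos hΓSα hPα
  have hCβpos : 0 < Cβ := div_pos hΓSβ hPβ
  set P : ℝ := (∏ i, Real.Gamma (α i)) / Real.Gamma (∑ i, α i) with hP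
  have hCP : Cα * P = 1 := by
    rw [hCα, hP]; field_simp
  -- pointwise identity on the simplex
  have heq : Set.EqOn
      (fun y => dirichletDensity n α y
        * Real.log (dirichletDensity n α y / dirichletDensity n β y))
      (fun y => (Real.log Cα - Real.log Cβ) * (Cα * dKer n α y)
        + ∑ j, ((α j - β j) * Cα) * (Real.log (dW n j y) * dKer n α y)) (dSet n) := by
    intro y hy
    have hKα := dKer_pos α hy
    have hKβ := dKer_pos β hy
    have hdα : dirichletDensity n α y = Cα * dKer n α y := by
      rw [hCα]; exact dirichletDensity_eq α hy
    have hdβ : dirichletDensity n β y = Cβ * dKer n β y := by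
      rw [hCβ]; exact dirichletDensity_eq β hy
    have hlog : Real.log (dirichletDensity n α y / dirichletDensity n β y)
        = (Real.log Cα - Real.log Cβ) + ∑ j, (α j - β j) * Real.log (dW n j y) := by
      rw [hdα, hdβ, Real.log_div (by positivity) (by positivity),
        Real.log_mul hCαpos.ne' hKα.ne', Real.log_mul hCβpos.ne' hKβ.ne',
        log_dKer α hy, log_dKer β hy]
      have hss : ∑ j : Fin (n+1), (α j - β j) * Real.log (dW n j y)
          = ∑ j : Fin (n+1), ((α j - 1) * Real.log (dW n j y)
            - (β j - 1) * Real.log (dW n j y)) := by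
        refine Finset.sum_congr rfl fun j _ => ?_
        ring
      rw [hss, Finset.sum_sub_distrib]
      ring
    simp only
    rw [hlog, hdα, mul_add, Finset.mul_sum]
    congr 1
    · ring
    · refine Finset.sum_congr rfl fun j _ => ?_
      ring
  rw [hTd, setIntegral_congr_fun (measurableSet_dSet n) heq]
  have hint0 : IntegrableOn
      (fun y => (Real.log Cα - Real.log Cβ) * (Cα * dKer n α y)) (dSet n) :=
    ((dKer_integrableOn hα).const_mul Cα).const_mul _
  have hintj : ∀ j : Fin (n+1), IntegrableOn
      (fun y => ((α j - β j) * Cα) * (Real.log (dW n j y) * dKer n α y)) (dSet n) :=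
    fun j => ((dKer_log_integral hn hα j).1).const_mul _
  rw [integral_add hint0 (integrable_finset_sum _ fun j _ => hintj j),
    integral_finset_sum _ (fun j _ => hintj j)]
  simp_rw [integral_const_mul]
  rw [dKer_integral hα]
  have hvals : ∀ j : Fin (n+1), ∫ y in dSet n, Real.log (dW n j y) * dKer n α y
      = P * (digamma (α j) - digamma (∑ i, α i)) := fun j => (dKer_log_integral hn hα j).2
  simp_rw [hvals]
  have hsum2 : ∑ j : Fin (n+1), ((α j - β j) * Cα)
        * (P * (digamma (α j) - digamma (∑ i, α i)))
      = ∑ j : Fin (n+1), (α j - β j) * (digamma (α j) - digamma (∑ i, α i)) := by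
    refine Finset.sum_congr rfl fun j _ => ?_
    calc ((α j - β j) * Cα) * (P * (digamma (α j) - digamma (∑ i, α i)))
        = (α j - β j) * (digamma (α j) - digamma (∑ i, α i)) * (Cα * P) := by ring
      _ = _ := by rw [hCP, mul_one]
  have hfirst : (Real.log Cα - Real.log Cβ) * (Cα * ((∏ i, Real.Gamma (α i)) / Real.Gamma (∑ i, α i)))
      = Real.log Cα - Real.log Cβ := by
    rw [← hP, hCP, mul_one]
  rw [hsum2]
  rw [show Cα * ((∏ i, Real.Gamma (α i)) / Real.Gamma (∑ i, α i)) = 1 from hCP]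
  rw [mul_one]
  have hlogC : Real.log Cα - Real.log Cβ
      = Real.log (Real.Gamma (∑ i, α i) / Real.Gamma (∑ i, β i))
        + ∑ i, Real.log (Real.Gamma (β i) / Real.Gamma (α i)) := by
    rw [hCα, hCβ, Real.log_div hΓSα.ne' hPα.ne', Real.log_div hΓSβ.ne' hPβ.ne',
      Real.log_div hΓSα.ne' hΓSβ.ne',
      Real.log_prod (fun i _ => (Real.Gamma_pos_of_pos (hα i)).ne'),
      Real.log_prod (fun i _ => (Real.Gamma_pos_of_pos (hβ i)).ne')]
    have : ∑ i, Real.log (Real.Gamma (β i) / Real.Gamma (α i))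
        = ∑ i, (Real.log (Real.Gamma (β i)) - Real.log (Real.Gamma (α i))) := by
      refine Finset.sum_congr rfl fun i _ => ?_
      rw [Real.log_div (Real.Gamma_pos_of_pos (hβ i)).ne' (Real.Gamma_pos_of_pos (hα i)).ne']
    rw [this, Finset.sum_sub_distrib]
    ring
  rw [hlogC]
end

section
/- Let n ≥ 1 be an integer and let α, β : Fin (n+1) → ℝ satisfy α i > 0 and β i > 0 for all i. Then the closed-form Dirichlet Kullback–Leibler expression is nonnegative: log (Γ(∑ i, α i) / Γ(∑ i, β i)) + ∑ i, log (Γ(β i) / Γ(α i)) + ∑ i, (α i − β i) · (ψ(α i) − ψ(∑ i, α i)) ≥ 0. -/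
open Set Real MeasureTheory

noncomputable def rB (s t : ℝ) : ℝ := ∫ x in Ioo (0:ℝ) 1, x ^ (s-1) * (1-x) ^ (t-1)

lemma rB_int {s t : ℝ} (hs : 0 < s) (ht : 0 < t) :
    IntegrableOn (fun x : ℝ => x ^ (s-1) * (1-x) ^ (t-1)) (Ioo 0 1) := by
  have h := (Complex.betaIntegral_convergent (u := (s:ℂ)) (v := (t:ℂ))
    (by simpa using hs) (by simpa using ht)).norm
  rw [intervalIntegrable_iff, uIoc_of_le zero_le_one] at h
  refine ((h.mono_set Ioo_subset_Ioc_self).congr_fun (fun x hx => ?_) measurableSet_Ioo)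
  obtain ⟨hx0, hx1⟩ := hx
  have h1x : (0:ℝ) < 1 - x := by linarith
  dsimp only
  rw [norm_mul]
  have e1 : ((s:ℂ) - 1) = ((s - 1 : ℝ) : ℂ) := by push_cast; ring
  have e2 : ((t:ℂ) - 1) = ((t - 1 : ℝ) : ℂ) := by push_cast; ring
  have e3 : (1 - (x:ℂ)) = ((1 - x : ℝ) : ℂ) := by push_cast; ring
  rw [e1, e2, e3, Complex.norm_cpow_eq_rpow_re_of_pos hx0, Complex.norm_cpow_eq_rpow_re_of_pos h1x]
  simp

lemma rB_eq {s t : ℝ} (hs : 0 < s) (ht : 0 < t) :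
    Real.Gamma s * Real.Gamma t = Real.Gamma (s + t) * rB s t := by
  have h := Complex.Gamma_mul_Gamma_eq_betaIntegral (s := (s:ℂ)) (t := (t:ℂ))
    (by simpa using hs) (by simpa using ht)
  have hbeta : Complex.betaIntegral (s:ℂ) (t:ℂ) = ((rB s t : ℝ) : ℂ) := by
    rw [Complex.betaIntegral]
    have : (∫ x : ℝ in (0:ℝ)..1, ((x:ℂ)) ^ ((s:ℂ) - 1) * (1 - (x:ℂ)) ^ ((t:ℂ) - 1))
        = ∫ x : ℝ in (0:ℝ)..1, (((x ^ (s-1) * (1-x) ^ (t-1) : ℝ)) : ℂ) := by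
      refine intervalIntegral.integral_congr_ae (Filter.Eventually.of_forall fun x hx => ?_)
      rw [uIoc_of_le (zero_le_one)] at hx
      obtain ⟨hx0, hx1⟩ := hx
      have e1 : ((s:ℂ) - 1) = ((s - 1 : ℝ) : ℂ) := by push_cast; ring
      have e2 : ((t:ℂ) - 1) = ((t - 1 : ℝ) : ℂ) := by push_cast; ring
      have e3 : (1 - (x:ℂ)) = ((1 - x : ℝ) : ℂ) := by push_cast; ring
      rw [e1, e2, e3, ← Complex.ofReal_cpow hx0.le, ← Complex.ofReal_cpow (by linarith),
        ← Complex.ofReal_mul]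
    rw [this, intervalIntegral.integral_ofReal]
    congr 1
    rw [intervalIntegral.integral_of_le zero_le_one, rB, MeasureTheory.integral_Ioc_eq_integral_Ioo]
  rw [hbeta, ← Complex.ofReal_add, Complex.Gamma_ofReal, Complex.Gamma_ofReal,
    Complex.Gamma_ofReal, ← Complex.ofReal_mul, ← Complex.ofReal_mul] at h
  exact_mod_cast h

lemma rB_pos {s t : ℝ} (hs : 0 < s) (ht : 0 < t) : 0 < rB s t := by
  have h := rB_eq hs ht
  have h1 : 0 < Real.Gamma s := Real.Gamma_pos_of_pos hs
  have h2 : 0 < Real.Gamma t := Real.Gamma_pos_of_pos ht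
  have h3 : 0 < Real.Gamma (s + t) := Real.Gamma_pos_of_pos (by linarith)
  nlinarith

lemma rB_holder {s t s' t' a b : ℝ} (hs : 0 < s) (ht : 0 < t) (hs' : 0 < s') (ht' : 0 < t')
    (ha : 0 < a) (hb : 0 < b) (hab : a + b = 1) :
    rB (a * s + b * s') (a * t + b * t') ≤ rB s t ^ a * rB s' t' ^ b := by
  let f : ℝ → ℝ → ℝ → ℝ → ℝ := fun c u v x => x ^ (c * (u - 1)) * (1 - x) ^ (c * (v - 1))
  have e : Real.HolderConjugate (1 / a) (1 / b) := Real.holderConjugate_one_div ha hb hab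
  have posf : ∀ c u v x : ℝ, x ∈ Ioo (0:ℝ) 1 → 0 ≤ f c u v x := fun c u v x hx =>
    mul_nonneg (rpow_nonneg hx.1.le _) (rpow_nonneg (by linarith [hx.2] : (0:ℝ) ≤ 1 - x) _)
  have posf' : ∀ c u v : ℝ, ∀ᵐ x : ℝ ∂volume.restrict (Ioo 0 1), 0 ≤ f c u v x := fun c u v =>
    (ae_restrict_iff' measurableSet_Ioo).mpr (ae_of_all _ (posf c u v))
  have fpow : ∀ {c x : ℝ} (_ : 0 < c) (u v : ℝ) (_ : x ∈ Ioo (0:ℝ) 1),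
      x ^ (u - 1) * (1 - x) ^ (v - 1) = f c u v x ^ (1 / c) := by
    intro c x hc u v hx
    have h1x : (0:ℝ) < 1 - x := by linarith [hx.2]
    dsimp only [f]
    rw [mul_rpow (rpow_nonneg hx.1.le _) (rpow_nonneg h1x.le _), ← rpow_mul hx.1.le,
      ← rpow_mul h1x.le]
    congr 2 <;> field_simp
  have f_mem_Lp : ∀ {c u v : ℝ} (hc : 0 < c) (hu : 0 < u) (hv : 0 < v),
      MemLp (f c u v) (ENNReal.ofReal (1 / c)) (volume.restrict (Ioo 0 1)) := by
    intro c u v hc hu hv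
    have A : ENNReal.ofReal (1 / c) ≠ 0 := by
      rwa [Ne, ENNReal.ofReal_eq_zero, not_le, one_div_pos]
    have B : ENNReal.ofReal (1 / c) ≠ ⊤ := ENNReal.ofReal_ne_top
    rw [← memLp_norm_rpow_iff _ A B, ENNReal.toReal_ofReal (one_div_nonneg.mpr hc.le),
      ENNReal.div_self A B, memLp_one_iff_integrable]
    · apply Integrable.congr (rB_int hu hv)
      refine Filter.eventuallyEq_of_mem (self_mem_ae_restrict measurableSet_Ioo) fun x hx => ?_
      rw [fpow hc u v hx]
      congr 1
      exact (norm_of_nonneg (posf _ _ _ x hx)).symm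
    · refine ContinuousOn.aestronglyMeasurable ?_ measurableSet_Ioo
      refine ContinuousOn.mul (fun x hx => ?_) (fun x hx => ?_)
      · exact (continuousAt_rpow_const _ _ (Or.inl hx.1.ne')).continuousWithinAt
      · refine ContinuousAt.continuousWithinAt ?_
        exact ContinuousAt.comp
          (continuousAt_rpow_const _ _ (Or.inl (by linarith [hx.2] : (1:ℝ) - x ≠ 0)))
          (continuous_const.sub continuous_id).continuousAt
  have hab' : b = 1 - a := by linarith
  rw [rB, rB, rB]
  convert! MeasureTheory.integral_mul_le_Lp_mul_Lq_of_nonneg e (posf' a s t) (posf' b s' t')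
    (f_mem_Lp ha hs ht) (f_mem_Lp hb hs' ht') using 1
  · refine setIntegral_congr_fun measurableSet_Ioo fun x hx => ?_
    dsimp only [f]
    have h1x : (0:ℝ) < 1 - x := by linarith [hx.2]
    have B1 : x ^ (a * s + b * s' - 1) = x ^ (a * (s - 1)) * x ^ (b * (s' - 1)) := by
      rw [← rpow_add hx.1]; congr 1; linarith
    have B2 : (1-x) ^ (a * t + b * t' - 1) = (1-x) ^ (a * (t - 1)) * (1-x) ^ (b * (t' - 1)) := by
      rw [← rpow_add h1x]; congr 1; linarith
    rw [B1, B2]; ring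
  · rw [one_div_one_div, one_div_one_div]
    congr 2 <;> exact setIntegral_congr_fun measurableSet_Ioo fun x hx => fpow (by assumption) _ _ hx

lemma logBeta_eq {s t : ℝ} (hs : 0 < s) (ht : 0 < t) :
    log (Real.Gamma s) + log (Real.Gamma t) - log (Real.Gamma (s + t)) = log (rB s t) := by
  have h1 : 0 < Real.Gamma s := Real.Gamma_pos_of_pos hs
  have h2 : 0 < Real.Gamma t := Real.Gamma_pos_of_pos ht
  have h3 : 0 < Real.Gamma (s + t) := Real.Gamma_pos_of_pos (by linarith)
  have h4 : rB s t = Real.Gamma s * Real.Gamma t / Real.Gamma (s + t) := by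
    field_simp [rB_eq hs ht]
    linarith [rB_eq hs ht]
  rw [h4, log_div (by positivity) h3.ne', log_mul h1.ne' h2.ne']

lemma logBeta_convex {s t s' t' a b : ℝ} (hs : 0 < s) (ht : 0 < t) (hs' : 0 < s') (ht' : 0 < t')
    (ha : 0 < a) (hb : 0 < b) (hab : a + b = 1) :
    log (Real.Gamma (a * s + b * s')) + log (Real.Gamma (a * t + b * t'))
        - log (Real.Gamma (a * s + b * s' + (a * t + b * t')))
      ≤ a * (log (Real.Gamma s) + log (Real.Gamma t) - log (Real.Gamma (s + t)))
        + b * (log (Real.Gamma s') + log (Real.Gamma t') - log (Real.Gamma (s' + t'))) := by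
  rw [logBeta_eq hs ht, logBeta_eq hs' ht', logBeta_eq (by positivity) (by positivity)]
  calc log (rB (a * s + b * s') (a * t + b * t')) ≤ log (rB s t ^ a * rB s' t' ^ b) := by
        apply Real.log_le_log (rB_pos (by positivity) (by positivity))
        exact rB_holder hs ht hs' ht' ha hb hab
    _ = a * log (rB s t) + b * log (rB s' t') := by
        rw [log_mul (rpow_pos_of_pos (rB_pos hs ht) a).ne' (rpow_pos_of_pos (rB_pos hs' ht') b).ne',
          log_rpow (rB_pos hs ht), log_rpow (rB_pos hs' ht')]

lemma F_convex : ∀ (m : ℕ) (x y : Fin (m+1) → ℝ), (∀ i, 0 < x i) → (∀ i, 0 < y i) →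
    ∀ {a b : ℝ}, 0 < a → 0 < b → a + b = 1 →
    (∑ i, log (Real.Gamma (a * x i + b * y i))) - log (Real.Gamma (∑ i, (a * x i + b * y i)))
      ≤ a * ((∑ i, log (Real.Gamma (x i))) - log (Real.Gamma (∑ i, x i)))
        + b * ((∑ i, log (Real.Gamma (y i))) - log (Real.Gamma (∑ i, y i))) := by
  intro m
  induction m with
  | zero =>
    intro x y hx hy a b ha hb hab
    have e1 : ∀ f : Fin (0+1) → ℝ, ∑ i, f i = f 0 := fun f => Fin.sum_univ_one f
    rw [e1, e1, e1, e1, e1, e1]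
    ring_nf
    exact le_refl _
  | succ m ih =>
    intro x y hx hy a b ha hb hab
    have hSx : 0 < ∑ i : Fin (m+1), x i.succ :=
      Finset.sum_pos (fun i _ => hx i.succ) Finset.univ_nonempty
    have hSy : 0 < ∑ i : Fin (m+1), y i.succ :=
      Finset.sum_pos (fun i _ => hy i.succ) Finset.univ_nonempty
    have hsum : ∑ i : Fin (m+1), (a * x i.succ + b * y i.succ)
        = a * (∑ i : Fin (m+1), x i.succ) + b * (∑ i : Fin (m+1), y i.succ) := by
      rw [Finset.sum_add_distrib, Finset.mul_sum, Finset.mul_sum]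
    have hIH := ih (fun i => x i.succ) (fun i => y i.succ) (fun i => hx i.succ)
      (fun i => hy i.succ) ha hb hab
    have hB := logBeta_convex (hx 0) hSx (hy 0) hSy ha hb hab
    rw [Fin.sum_univ_succ (fun i => log (Real.Gamma (a * x i + b * y i))),
      Fin.sum_univ_succ (fun i => (a * x i + b * y i)),
      Fin.sum_univ_succ (fun i => log (Real.Gamma (x i))),
      Fin.sum_univ_succ x,
      Fin.sum_univ_succ (fun i => log (Real.Gamma (y i))),
      Fin.sum_univ_succ y, hsum]
    rw [hsum] at hIH
    linarith

lemma hasDerivAt_logGamma_line {c : ℝ} (e : ℝ) (hc : 0 < c) :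
    HasDerivAt (fun u => log (Real.Gamma (c + u * e))) (digamma c * e) 0 := by
  have h1 : DifferentiableAt ℝ Real.Gamma c :=
    Real.differentiableAt_Gamma (fun m => by
      intro h
      have : (0:ℝ) ≤ m := Nat.cast_nonneg m
      rw [h] at hc; linarith)
  have hdiff : DifferentiableAt ℝ (fun t => log (Real.Gamma t)) c :=
    h1.log (Real.Gamma_pos_of_pos hc).ne'
  have h2 : HasDerivAt (fun t => log (Real.Gamma t)) (digamma c) c := hdiff.hasDerivAt
  have h3 : HasDerivAt (fun u : ℝ => c + u * e) e 0 := by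
    simpa using ((hasDerivAt_id (0:ℝ)).mul_const e).const_add c
  have h2' : HasDerivAt (fun t => log (Real.Gamma t)) (digamma c) ((fun u : ℝ => c + u * e) 0) := by
    simpa using h2
  simpa [Function.comp_def] using h2'.comp (0:ℝ) h3

/-- Positivity of the closed-form Dirichlet Kullback–Leibler divergence. -/
theorem dirichlet_kl_nonneg (n : ℕ) (hn : 1 ≤ n) (α β : Fin (n + 1) → ℝ)
    (hα : ∀ i, 0 < α i) (hβ : ∀ i, 0 < β i) :
    Real.log (Real.Gamma (∑ i, α i) / Real.Gamma (∑ i, β i))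
      + ∑ i, Real.log (Real.Gamma (β i) / Real.Gamma (α i))
      + ∑ i, (α i - β i) * (digamma (α i) - digamma (∑ i, α i)) ≥ 0 := by
  have hSα : 0 < ∑ i, α i := Finset.sum_pos (fun i _ => hα i) Finset.univ_nonempty
  have hSβ : 0 < ∑ i, β i := Finset.sum_pos (fun i _ => hβ i) Finset.univ_nonempty
  set d : Fin (n+1) → ℝ := fun i => β i - α i with hd
  set g : ℝ → ℝ := fun u =>
    (∑ i, log (Real.Gamma (α i + u * d i)))
      - log (Real.Gamma ((∑ i, α i) + u * ((∑ i, β i) - (∑ i, α i)))) with hgdef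
  -- sum compatibility
  have hS : ∀ w : ℝ, (∑ i, α i) + w * ((∑ i, β i) - (∑ i, α i)) = ∑ i, (α i + w * d i) := by
    intro w
    rw [Finset.sum_add_distrib, ← Finset.mul_sum]
    congr 2
    rw [hd, Finset.sum_sub_distrib]
  -- positivity along the segment
  have hpos : ∀ (u : ℝ), u ∈ Icc (0:ℝ) 1 → ∀ i, 0 < α i + u * d i := by
    intro u hu i
    have h1 := hα i; have h2 := hβ i
    have hdi : d i = β i - α i := rfl
    rw [hdi]
    rcases lt_or_eq_of_le hu.1 with h | h
    · nlinarith [mul_nonneg (sub_nonneg.mpr hu.2) h1.le, mul_pos h h2]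
    · rw [← h]; simpa using h1
  -- convexity of g on [0,1]
  have hconv : ConvexOn ℝ (Icc (0:ℝ) 1) g := by
    refine convexOn_iff_forall_pos.mpr ⟨convex_Icc _ _, fun u hu v hv a b ha hb hab => ?_⟩
    simp only [smul_eq_mul, hgdef]
    have hkey : ∀ i, α i + (a * u + b * v) * d i = a * (α i + u * d i) + b * (α i + v * d i) := by
      intro i
      linear_combination (-(α i)) * hab
    simp only [hkey, hS]
    exact F_convex n (fun i => α i + u * d i) (fun i => α i + v * d i)
      (hpos u hu) (hpos v hv) ha hb hab
  -- derivative of g at 0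
  set D : ℝ := (∑ i, digamma (α i) * d i)
      - digamma (∑ i, α i) * ((∑ i, β i) - (∑ i, α i)) with hD
  have hder : HasDerivAt g D 0 := by
    apply HasDerivAt.sub
    · exact HasDerivAt.fun_sum (fun i _ => hasDerivAt_logGamma_line (d i) (hα i))
    · exact hasDerivAt_logGamma_line _ hSα
  -- tangent line inequality
  have key : D ≤ slope g 0 1 :=
    hconv.le_slope_of_hasDerivAt (by simp) (by simp) zero_lt_one hder
  rw [slope_def_field] at key
  have hslope : (g 1 - g 0) / (1 - 0) = g 1 - g 0 := by norm_num
  rw [hslope] at key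
  -- evaluate g at 0 and 1
  have hg0 : g 0 = (∑ i, log (Real.Gamma (α i))) - log (Real.Gamma (∑ i, α i)) := by
    simp [hgdef]
  have hg1 : g 1 = (∑ i, log (Real.Gamma (β i))) - log (Real.Gamma (∑ i, β i)) := by
    have e1 : ∀ i, α i + 1 * d i = β i := fun i => by rw [hd]; ring
    have e2 : (∑ i, α i) + 1 * ((∑ i, β i) - (∑ i, α i)) = ∑ i, β i := by ring
    rw [hgdef]
    simp only [e1, e2]
  rw [hg0, hg1] at key
  -- rewrite the goal
  have E3 : log (Real.Gamma (∑ i, α i) / Real.Gamma (∑ i, β i))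
      = log (Real.Gamma (∑ i, α i)) - log (Real.Gamma (∑ i, β i)) :=
    log_div (Real.Gamma_pos_of_pos hSα).ne' (Real.Gamma_pos_of_pos hSβ).ne'
  have E2 : ∑ i, log (Real.Gamma (β i) / Real.Gamma (α i))
      = (∑ i, log (Real.Gamma (β i))) - ∑ i, log (Real.Gamma (α i)) := by
    rw [← Finset.sum_sub_distrib]
    exact Finset.sum_congr rfl fun i _ =>
      log_div (Real.Gamma_pos_of_pos (hβ i)).ne' (Real.Gamma_pos_of_pos (hα i)).ne'
  have E1 : ∑ i, (α i - β i) * (digamma (α i) - digamma (∑ i, α i))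
      = -(∑ i, digamma (α i) * d i)
        + digamma (∑ i, α i) * ((∑ i, β i) - (∑ i, α i)) := by
    calc ∑ i, (α i - β i) * (digamma (α i) - digamma (∑ i, α i))
        = ∑ i, (-(digamma (α i) * d i) + digamma (∑ i, α i) * d i) :=
          Finset.sum_congr rfl fun i _ => by rw [hd]; ring
      _ = -(∑ i, digamma (α i) * d i) + digamma (∑ i, α i) * (∑ i, d i) := by
          rw [Finset.sum_add_distrib, ← Finset.mul_sum, Finset.sum_neg_distrib]
      _ = _ := by rw [hd, Finset.sum_sub_distrib]
  rw [E3, E2, E1]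
  rw [hD] at key
  linarith
end

section
/- Let n ≥ 1 be an integer and let α, β : Fin (n+1) → ℝ satisfy α i > 0 and β i > 0 for all i. Then log (Γ(∑ i, α i) / Γ(∑ i, β i)) + ∑ i, log (Γ(β i) / Γ(α i)) + ∑ i, (α i − β i) · (ψ(α i) − ψ(∑ i, α i)) = 0 if and only if α = β. -/
open Filter Topology Set

namespace DKL


noncomputable def T (x : ℝ) : ℝ := ∑' k : ℕ, 1 / (x + k) ^ 2
noncomputable def U (x : ℝ) : ℝ := ∑' k : ℕ, 1 / (x + k) ^ 3

lemma summable_pow {x : ℝ} (hx : 0 < x) {p : ℕ} (hp : 2 ≤ p) :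
    Summable (fun k : ℕ => 1 / (x + k) ^ p) := by
  rw [← summable_nat_add_iff 1]
  have hbase : Summable (fun k : ℕ => 1 / ((k : ℝ) + 1) ^ p) := by
    have := (summable_nat_add_iff (f := fun n : ℕ => 1 / (n : ℝ) ^ p) 1).2
      (Real.summable_one_div_nat_pow.2 hp)
    refine this.congr fun k => by push_cast; ring
  refine Summable.of_nonneg_of_le (fun k => by positivity) (fun k => ?_) hbase
  apply one_div_le_one_div_of_le (by positivity)
  apply pow_le_pow_left₀ (by positivity)
  push_cast; linarith

lemma summable_T {x : ℝ} (hx : 0 < x) : Summable (fun k : ℕ => 1 / (x + k) ^ 2) :=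
  summable_pow hx le_rfl

lemma summable_U {x : ℝ} (hx : 0 < x) : Summable (fun k : ℕ => 1 / (x + k) ^ 3) :=
  summable_pow hx (by norm_num)

lemma hasSum_telescope {g : ℕ → ℝ} (hpos : ∀ k, g (k + 1) ≤ g k)
    (h0 : Tendsto g atTop (𝓝 0)) : HasSum (fun k => g k - g (k + 1)) (g 0) := by
  rw [hasSum_iff_tendsto_nat_of_nonneg (fun k => sub_nonneg.2 (hpos k))]
  have : (fun n => ∑ i ∈ Finset.range n, (g i - g (i + 1))) = fun n => g 0 - g n := by
    funext n; exact Finset.sum_range_sub' g n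
  rw [this]
  simpa using tendsto_const_nhds.sub h0

lemma tendsto_inv_add {x : ℝ} : Tendsto (fun k : ℕ => 1 / (x + k)) atTop (𝓝 0) := by
  simp only [one_div]
  exact Tendsto.inv_tendsto_atTop (tendsto_atTop_add_const_left _ x tendsto_natCast_atTop_atTop)

lemma add_nat_pos {x : ℝ} (hx : 0 < x) (k : ℕ) : 0 < x + k := by positivity

/-- telescoping: `∑' k, (1/(x+k) - 1/(x+k+1)) = 1/x` as a HasSum -/
lemma hasSum_tele1 {x : ℝ} (hx : 0 < x) :
    HasSum (fun k : ℕ => 1 / (x + k) - 1 / (x + (k + 1 : ℕ))) (1 / x) := by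
  have := hasSum_telescope (g := fun k : ℕ => 1 / (x + k))
    (fun k => by
      apply one_div_le_one_div_of_le (add_nat_pos hx k)
      push_cast; linarith)
    tendsto_inv_add
  simpa using this

lemma hasSum_tele_pow {x : ℝ} (hx : 0 < x) (p : ℕ) (hp : 1 ≤ p) (c : ℝ) (hc : 0 < c) :
    HasSum (fun k : ℕ => 1 / (c * (x + k) ^ p) - 1 / (c * (x + (k + 1 : ℕ)) ^ p))
      (1 / (c * x ^ p)) := by
  have htend : Tendsto (fun k : ℕ => 1 / (c * (x + k) ^ p)) atTop (𝓝 0) := by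
    have h2 : Tendsto (fun k : ℕ => (1 / c) * (1 / (x + k)) ^ p) atTop (𝓝 ((1 / c) * 0 ^ p)) :=
      (tendsto_inv_add.pow p).const_mul _
    rw [zero_pow (by omega), mul_zero] at h2
    refine h2.congr fun k => ?_
    have := (add_nat_pos hx k).ne'
    field_simp
    rw [← mul_pow, one_div_mul_cancel this, one_pow]
  have := hasSum_telescope (g := fun k : ℕ => 1 / (c * (x + k) ^ p))
    (fun k => by
      apply one_div_le_one_div_of_le (by positivity)
      have h2 : (x + k) ^ p ≤ (x + (k + 1 : ℕ)) ^ p := by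
        apply pow_le_pow_left₀ (add_nat_pos hx k).le
        push_cast; linarith
      nlinarith)
    htend
  simpa using this


lemma T_pos {x : ℝ} (hx : 0 < x) : 0 < T x := by
  refine Summable.tsum_pos (summable_T hx) (fun k => by positivity) 0 ?_
  have := add_nat_pos hx 0
  positivity

lemma U_pos {x : ℝ} (hx : 0 < x) : 0 < U x := by
  refine Summable.tsum_pos (summable_U hx) (fun k => by positivity) 0 ?_
  have := add_nat_pos hx 0
  positivity

lemma T_rec {x : ℝ} (hx : 0 < x) : T x = 1 / x ^ 2 + T (x + 1) := by
  rw [T, Summable.tsum_eq_zero_add (summable_T hx)]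
  congr 1
  · norm_num
  · rw [T]; apply tsum_congr; intro k; push_cast; ring_nf

lemma U_rec {x : ℝ} (hx : 0 < x) : U x = 1 / x ^ 3 + U (x + 1) := by
  rw [U, Summable.tsum_eq_zero_add (summable_U hx)]
  congr 1
  · norm_num
  · rw [U]; apply tsum_congr; intro k; push_cast; ring_nf

lemma T_tail_le {x : ℝ} (hx : 0 < x) : T (x + 1) ≤ 1 / x := by
  have h := hasSum_tele1 hx
  have hterm : ∀ k : ℕ, 1 / ((x + 1) + k) ^ 2 ≤ 1 / (x + k) - 1 / (x + (k + 1 : ℕ)) := by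
    intro k
    have hk : (0:ℝ) < x + k := add_nat_pos hx k
    have e : 1 / (x + k) - 1 / (x + (k + 1 : ℕ)) = 1 / ((x + k) * (x + k + 1)) := by
      push_cast
      rw [div_sub_div _ _ (by linarith) (by linarith)]
      ring_nf
    rw [e]
    apply one_div_le_one_div_of_le (by nlinarith)
    push_cast; nlinarith
  exact hasSum_le hterm (summable_T (by linarith)).hasSum h |>.trans_eq rfl

lemma T_le {x : ℝ} (hx : 0 < x) : T x ≤ 1 / x ^ 2 + 1 / x := by
  rw [T_rec hx]
  have := T_tail_le hx
  linarith

lemma trapezoid_ineq {t : ℝ} (ht : 0 < t) :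
    (1 / (2 * t ^ 2) - 1 / (2 * (t + 1) ^ 2)) + (1 / (2 * t ^ 3) - 1 / (2 * (t + 1) ^ 3))
      ≤ 1 / t ^ 3 := by
  have h1 : (0:ℝ) < t + 1 := by linarith
  rw [div_sub_div _ _ (by positivity) (by positivity),
    div_sub_div _ _ (by positivity) (by positivity),
    div_add_div _ _ (by positivity) (by positivity),
    div_le_div_iff₀ (by positivity) (by positivity)]
  ring_nf
  nlinarith [pow_pos ht 3, pow_pos h1 3, pow_pos ht 2, pow_pos h1 2, sq_nonneg t,
    mul_pos (pow_pos ht 3) (pow_pos h1 3), mul_pos (pow_pos ht 2) (pow_pos h1 2),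
    mul_pos ht h1, sq_nonneg (t*(t+1)), pow_pos (mul_pos ht h1) 2, pow_pos (mul_pos ht h1) 3]

lemma U_ge {x : ℝ} (hx : 0 < x) : 1 / (2 * x ^ 2) + 1 / (2 * x ^ 3) ≤ U x := by
  have h2 := hasSum_tele_pow hx 2 (by norm_num) 2 (by norm_num)
  have h3 := hasSum_tele_pow hx 3 (by norm_num) 2 (by norm_num)
  refine hasSum_le (fun k => ?_) (h2.add h3) (summable_U hx).hasSum
  have ht : (0:ℝ) < x + k := add_nat_pos hx k
  have e1 : x + ((k + 1 : ℕ):ℝ) = (x + k) + 1 := by push_cast; ring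
  rw [e1]
  exact trapezoid_ineq ht

lemma T_lt {x : ℝ} (hx : 0 < x) : T x < 1 / x + U x := by
  have hs := (hasSum_tele1 hx).add (summable_U hx).hasSum
  rw [T, U, ← hs.tsum_eq]
  have hle : ∀ k : ℕ, 1 / (x + k) ^ 2 ≤ (1 / (x + k) - 1 / (x + (k + 1 : ℕ))) + 1 / (x + k) ^ 3 := by
    intro k
    have ht : (0:ℝ) < x + k := add_nat_pos hx k
    have e : 1 / (x + k) - 1 / (x + (k + 1 : ℕ)) = 1 / ((x + k) * (x + k + 1)) := by
      push_cast
      rw [div_sub_div _ _ (by linarith) (by linarith)]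
      ring_nf
    rw [e]
    rw [div_add_div _ _ (by positivity) (by positivity), div_le_div_iff₀ (by positivity) (by positivity)]
    nlinarith [pow_pos ht 2, pow_pos ht 3]
  refine Summable.tsum_lt_tsum (i := 0) hle ?_ (summable_T hx) hs.summable
  · -- strict at 0
    have ht : (0:ℝ) < x := hx
    have e : 1 / (x + (0:ℕ)) - 1 / (x + ((0 + 1 : ℕ):ℝ)) = 1 / (x * (x + 1)) := by
      push_cast
      rw [div_sub_div _ _ (by linarith) (by linarith)]
      ring_nf
    simp only [Nat.cast_zero, add_zero] at e ⊢
    rw [e]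
    rw [div_add_div _ _ (by positivity) (by positivity), div_lt_div_iff₀ (by positivity) (by positivity)]
    nlinarith [pow_pos ht 2, pow_pos ht 3]

lemma TU_neg {x : ℝ} (hx : 0 < x) : T x - 2 * x * U x < 0 := by
  rcases le_or_gt 1 x with h1 | h1
  · have hTlt := T_lt hx
    have hUge := U_ge hx
    have h3 : (2*x - 1) * (1/(2*x^2) + 1/(2*x^3)) ≤ (2*x - 1) * U x :=
      mul_le_mul_of_nonneg_left hUge (by linarith)
    have h4 : 1/x ≤ (2*x - 1) * (1/(2*x^2) + 1/(2*x^3)) := by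
      have e : (2*x - 1) * (1/(2*x^2) + 1/(2*x^3)) = ((2*x-1)*(x+1))/(2*x^3) := by
        field_simp
      rw [e, div_le_div_iff₀ hx (by positivity)]
      nlinarith [sq_nonneg x, pow_pos hx 2]
    have hU := U_pos hx
    nlinarith
  · have hx1 : (0:ℝ) < x + 1 := by linarith
    have e1 := T_rec hx
    have e2 := U_rec hx
    have hU1 := U_pos hx1
    have hT1 := T_le hx1
    have hnum : 1/(x+1)^2 + 1/(x+1) < 1/x^2 := by
      rw [div_add_div _ _ (by positivity) (by positivity), div_lt_div_iff₀ (by positivity) (by positivity)]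
      nlinarith [sq_nonneg x, mul_pos hx hx, mul_pos (mul_pos hx hx) hx]
    have e2' : 2 * x * U x = 2 / x ^ 2 + 2 * x * U (x + 1) := by
      rw [e2]; field_simp
    have hpos : 0 < 2 * x * U (x + 1) := by positivity
    have key : T x - 2 * x * U x = T (x + 1) - 1 / x ^ 2 - 2 * x * U (x + 1) := by
      rw [e1, e2']; ring
    rw [key]
    linarith

noncomputable def lg (N : ℕ) (x : ℝ) : ℝ :=
  x * Real.log N + Real.log (Nat.factorial N) - ∑ k ∈ Finset.range (N + 1), Real.log (x + k)

noncomputable def dg (N : ℕ) (x : ℝ) : ℝ :=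
  Real.log N - ∑ k ∈ Finset.range (N + 1), 1 / (x + k)

noncomputable def d2 (N : ℕ) (x : ℝ) : ℝ := ∑ k ∈ Finset.range (N + 1), 1 / (x + k) ^ 2

noncomputable def d3 (N : ℕ) (x : ℝ) : ℝ := ∑ k ∈ Finset.range (N + 1), -2 / (x + k) ^ 3

noncomputable def psi (x : ℝ) : ℝ :=
  -Real.eulerMascheroniConstant + ∑' k : ℕ, (1 / ((k : ℝ) + 1) - 1 / (x + k))

lemma add_nat_pos' {x : ℝ} (hx : 0 < x) (k : ℕ) : 0 < x + k := by positivity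

lemma hasDerivAt_lg (N : ℕ) {x : ℝ} (hx : 0 < x) : HasDerivAt (lg N) (dg N x) x := by
  have h1 : HasDerivAt (fun y : ℝ => y * Real.log N + Real.log (Nat.factorial N))
      (Real.log N) x := by
    simpa using (hasDerivAt_mul_const (Real.log N)).add_const (Real.log (Nat.factorial N))
  have h2 : ∀ k ∈ Finset.range (N + 1),
      HasDerivAt (fun y : ℝ => Real.log (y + k)) (1 / (x + k)) x := by
    intro k _
    have hk : x + (k : ℝ) ≠ 0 := (add_nat_pos' hx k).ne'
    have := (Real.hasDerivAt_log hk).comp x ((hasDerivAt_id x).add_const (k : ℝ))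
    simpa [one_div, Function.comp_def] using this
  have h3 : HasDerivAt (fun y : ℝ => ∑ k ∈ Finset.range (N + 1), Real.log (y + k))
      (∑ k ∈ Finset.range (N + 1), 1 / (x + k)) x := HasDerivAt.fun_sum h2
  exact h1.sub h3

lemma hasDerivAt_dg (N : ℕ) {x : ℝ} (hx : 0 < x) : HasDerivAt (dg N) (d2 N x) x := by
  have h2 : ∀ k ∈ Finset.range (N + 1),
      HasDerivAt (fun y : ℝ => 1 / (y + k)) (-1 / (x + k) ^ 2) x := by
    intro k _
    have hk : x + (k : ℝ) ≠ 0 := (add_nat_pos' hx k).ne'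
    have := ((hasDerivAt_id x).add_const (k : ℝ)).inv hk
    simpa [one_div, Pi.inv_def] using this
  have h4 := (hasDerivAt_const x (Real.log N)).fun_sub (HasDerivAt.fun_sum h2)
  have e : d2 N x = 0 - ∑ k ∈ Finset.range (N + 1), -1 / (x + k) ^ 2 := by
    rw [zero_sub, ← Finset.sum_neg_distrib]
    exact Finset.sum_congr rfl fun k _ => by ring
  rw [e]
  exact h4

lemma hasDerivAt_d2 (N : ℕ) {x : ℝ} (hx : 0 < x) : HasDerivAt (d2 N ·) (d3 N x) x := by
  have h2 : ∀ k ∈ Finset.range (N + 1),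
      HasDerivAt (fun y : ℝ => 1 / (y + k) ^ 2) (-2 / (x + k) ^ 3) x := by
    intro k _
    have hk : (0:ℝ) < x + k := add_nat_pos' hx k
    have hbase : HasDerivAt (fun y : ℝ => (y + (k:ℝ)) ^ 2) (2 * (x + k)) x := by
      simpa [Pi.pow_def] using ((hasDerivAt_id x).add_const (k : ℝ)).pow 2
    have hne : (x + (k:ℝ)) ^ 2 ≠ 0 := by positivity
    have := hbase.inv hne
    have e : -(2 * (x + (k:ℝ))) / ((x + k) ^ 2) ^ 2 = -2 / (x + k) ^ 3 := by
      field_simp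
    rw [e] at this
    simpa [one_div, Pi.inv_def] using this
  exact HasDerivAt.fun_sum h2

lemma tendsto_lg {x : ℝ} (hx : 0 < x) :
    Tendsto (fun N => lg N x) atTop (𝓝 (Real.log (Real.Gamma x))) := by
  have hΓ : (0:ℝ) < Real.Gamma x := Real.Gamma_pos_of_pos hx
  have h := (Real.continuousAt_log hΓ.ne').tendsto.comp (Real.GammaSeq_tendsto_Gamma x)
  apply h.congr'
  filter_upwards [eventually_gt_atTop 0] with N hN
  have hN0 : (0:ℝ) < (N:ℝ) := by exact_mod_cast hN
  have hnum : (0:ℝ) < (N:ℝ) ^ x * (Nat.factorial N : ℝ) := by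
    have : (0:ℝ) < (N:ℝ) ^ x := Real.rpow_pos_of_pos hN0 x
    have h2 : (0:ℝ) < (Nat.factorial N : ℝ) := by exact_mod_cast N.factorial_pos
    positivity
  have hden : (0:ℝ) < ∏ j ∈ Finset.range (N + 1), (x + j) :=
    Finset.prod_pos fun j _ => add_nat_pos' hx j
  simp only [Function.comp_apply, Real.GammaSeq]
  rw [Real.log_div hnum.ne' hden.ne', Real.log_mul (Real.rpow_pos_of_pos hN0 x).ne'
      (by exact_mod_cast N.factorial_pos.ne'), Real.log_rpow hN0,
    Real.log_prod (fun j _ => (add_nat_pos' hx j).ne')]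
  rfl

noncomputable def cseq (N : ℕ) : ℝ := Real.log N - ∑ k ∈ Finset.range (N + 1), 1 / ((k : ℝ) + 1)

lemma tendsto_cseq :
    Tendsto cseq atTop (𝓝 (-Real.eulerMascheroniConstant)) := by
  have hA : Tendsto (fun N : ℕ => -Real.eulerMascheroniSeq (N + 1)) atTop
      (𝓝 (-Real.eulerMascheroniConstant)) :=
    (Real.tendsto_eulerMascheroniSeq.comp (tendsto_add_atTop_nat 1)).neg
  have hB : Tendsto (fun N : ℕ => Real.log N - Real.log ((N : ℝ) + 2)) atTop (𝓝 0) := by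
    have h1 : Tendsto (fun N : ℕ => 1 + 2 / (N : ℝ)) atTop (𝓝 1) := by
      have := tendsto_const_div_atTop_nhds_zero_nat (2:ℝ)
      simpa using tendsto_const_nhds.add this
    have h2 := ((Real.continuousAt_log one_ne_zero).tendsto.comp h1).neg
    rw [Real.log_one, neg_zero] at h2
    apply h2.congr'
    filter_upwards [eventually_gt_atTop 0] with N hN
    have hN0 : (0:ℝ) < (N:ℝ) := by exact_mod_cast hN
    simp only [Function.comp_apply]
    rw [show (1 : ℝ) + 2 / (N:ℝ) = ((N:ℝ) + 2) / N by field_simp,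
      Real.log_div (by linarith) hN0.ne']
    ring
  have := hA.add hB
  rw [add_zero] at this
  apply this.congr
  intro N
  simp only [cseq, Real.eulerMascheroniSeq]
  have hh : ((harmonic (N + 1) : ℚ) : ℝ) = ∑ k ∈ Finset.range (N + 1), 1 / ((k : ℝ) + 1) := by
    rw [harmonic]
    push_cast
    simp [one_div]
  rw [hh]
  have e2 : ((N:ℝ) + 1 + 1) = (N:ℝ) + 2 := by ring
  push_cast
  rw [e2]
  ring

/-- shift a uniform convergence statement from `range N` to `range (N+1)` partial sums -/
lemma TUO_succ {f : ℕ → ℝ → ℝ} {g : ℝ → ℝ} {s : Set ℝ}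
    (h : TendstoUniformlyOn (fun N x => ∑ k ∈ Finset.range N, f k x) g atTop s) :
    TendstoUniformlyOn (fun N x => ∑ k ∈ Finset.range (N + 1), f k x) g atTop s :=
  fun v hv => (tendsto_add_atTop_nat 1).eventually (h v hv)

section unif
variable {a b : ℝ} (ha : 0 < a) (ha1 : a ≤ 1)

lemma hbase2 : Summable (fun k : ℕ => 1 / ((k : ℝ) + 1) ^ 2) :=
  (summable_pow one_pos le_rfl).congr fun k => by rw [add_comm]

lemma hbase3 : Summable (fun k : ℕ => 1 / ((k : ℝ) + 1) ^ 3) :=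
  (summable_pow (p := 3) one_pos (by norm_num)).congr fun k => by rw [add_comm]

include ha ha1 in
lemma denom_ge {x : ℝ} (hx : x ∈ Icc a b) (k : ℕ) : a * ((k : ℝ) + 1) ≤ x + k := by
  have hk : (0:ℝ) ≤ k := Nat.cast_nonneg k
  have := hx.1
  nlinarith

include ha ha1 in
lemma tuo_S :
    TendstoUniformlyOn (fun N x => ∑ k ∈ Finset.range (N + 1), (1 / ((k : ℝ) + 1) - 1 / (x + k)))
      (fun x => ∑' k : ℕ, (1 / ((k : ℝ) + 1) - 1 / (x + k))) atTop (Icc a b) := by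
  refine TUO_succ (tendstoUniformlyOn_tsum_nat
    (u := fun k => ((b + 1) / a) * (1 / ((k : ℝ) + 1) ^ 2)) (hbase2.mul_left _) ?_)
  · intro k x hx
    have hx0 : 0 < x := lt_of_lt_of_le ha hx.1
    have hxk : (0:ℝ) < x + k := add_nat_pos' hx0 k
    have hk1 : (0:ℝ) < (k : ℝ) + 1 := by positivity
    have e : 1 / ((k : ℝ) + 1) - 1 / (x + k) = (x - 1) / (((k : ℝ) + 1) * (x + k)) := by
      field_simp
      ring
    rw [Real.norm_eq_abs, e, abs_div,
      abs_of_pos (show (0:ℝ) < ((k : ℝ) + 1) * (x + k) by positivity)]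
    have hnum : |x - 1| ≤ b + 1 := by
      rw [abs_le]
      constructor <;> linarith [hx.1, hx.2, ha]
    have hden : a * ((k : ℝ) + 1) ^ 2 ≤ ((k : ℝ) + 1) * (x + k) := by
      have := denom_ge ha ha1 hx k
      nlinarith
    calc |x - 1| / (((k : ℝ) + 1) * (x + k)) ≤ (b + 1) / (a * ((k : ℝ) + 1) ^ 2) := by
          apply div_le_div₀ (le_trans (abs_nonneg _) hnum) hnum (by positivity) hden
      _ = ((b + 1) / a) * (1 / ((k : ℝ) + 1) ^ 2) := by field_simp
  
include ha ha1 in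
lemma tuo_d2 :
    TendstoUniformlyOn (fun N x => d2 N x)
      (fun x => ∑' k : ℕ, 1 / (x + k) ^ 2) atTop (Icc a b) := by
  refine TUO_succ (tendstoUniformlyOn_tsum_nat
    (u := fun k => (1 / a ^ 2) * (1 / ((k : ℝ) + 1) ^ 2)) (hbase2.mul_left _) ?_)
  · intro k x hx
    have hx0 : 0 < x := lt_of_lt_of_le ha hx.1
    have hxk : (0:ℝ) < x + k := add_nat_pos' hx0 k
    have hk1 : (0:ℝ) < (k : ℝ) + 1 := by positivity
    rw [Real.norm_eq_abs, abs_of_pos (by positivity)]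
    have hden := denom_ge ha ha1 hx k
    have : (a * ((k : ℝ) + 1)) ^ 2 ≤ (x + k) ^ 2 := pow_le_pow_left₀ (by positivity) hden 2
    calc 1 / (x + k) ^ 2 ≤ 1 / (a * ((k : ℝ) + 1)) ^ 2 :=
          one_div_le_one_div_of_le (by positivity) this
      _ = (1 / a ^ 2) * (1 / ((k : ℝ) + 1) ^ 2) := by rw [mul_pow]; field_simp

include ha ha1 in
lemma tuo_d3 :
    TendstoUniformlyOn (fun N x => d3 N x)
      (fun x => ∑' k : ℕ, -2 / (x + k) ^ 3) atTop (Icc a b) := by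
  refine TUO_succ (tendstoUniformlyOn_tsum_nat
    (u := fun k => (2 / a ^ 3) * (1 / ((k : ℝ) + 1) ^ 3)) (hbase3.mul_left _) ?_)
  · intro k x hx
    have hx0 : 0 < x := lt_of_lt_of_le ha hx.1
    have hxk : (0:ℝ) < x + k := add_nat_pos' hx0 k
    have hk1 : (0:ℝ) < (k : ℝ) + 1 := by positivity
    rw [Real.norm_eq_abs, abs_div, abs_of_pos (show (0:ℝ) < (x + (k:ℝ)) ^ 3 by positivity),
      show |(-2:ℝ)| = 2 by norm_num]
    have hden := denom_ge ha ha1 hx k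
    have h3 : (a * ((k : ℝ) + 1)) ^ 3 ≤ (x + k) ^ 3 := by
      apply pow_le_pow_left₀ (by positivity) hden
    calc (2:ℝ) / (x + k) ^ 3 ≤ 2 / (a * ((k : ℝ) + 1)) ^ 3 := by
          apply div_le_div₀ (by norm_num) le_rfl (by positivity) h3
      _ = (2 / a ^ 3) * (1 / ((k : ℝ) + 1) ^ 3) := by rw [mul_pow]; field_simp

end unif

/-- reduce a locally-uniform goal on `Ioi 0` to uniform convergence on suitable `Icc` -/
lemma tlu_of_icc {F : ℕ → ℝ → ℝ} {f : ℝ → ℝ}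
    (h : ∀ a b : ℝ, 0 < a → a ≤ 1 → TendstoUniformlyOn F f atTop (Icc a b)) :
    TendstoLocallyUniformlyOn F f atTop (Ioi (0:ℝ)) := by
  rw [tendstoLocallyUniformlyOn_iff_forall_isCompact isOpen_Ioi]
  intro K hKsub hK
  rcases K.eq_empty_or_nonempty with rfl | hne
  · exact tendstoUniformlyOn_empty
  · have hinf : sInf K ∈ K := hK.sInf_mem hne
    have ha0 : 0 < sInf K := hKsub hinf
    set a := min (sInf K) 1 with hadef
    have ha : 0 < a := lt_min ha0 one_pos
    have hsub : K ⊆ Icc a (sSup K) := by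
      intro x hx
      exact ⟨le_trans (min_le_left _ _) (csInf_le hK.bddBelow hx), le_csSup hK.bddAbove hx⟩
    exact (h a (sSup K) ha (min_le_right _ _)).mono hsub

lemma tlu_dg : TendstoLocallyUniformlyOn dg psi atTop (Ioi (0:ℝ)) := by
  apply tlu_of_icc
  intro a b ha ha1
  have hc : TendstoUniformlyOn (fun N (_ : ℝ) => cseq N)
      (fun _ => -Real.eulerMascheroniConstant) atTop (Icc a b) :=
    tendsto_cseq.tendstoUniformlyOn_const _
  have := hc.add (tuo_S ha ha1)
  apply (this.congr ?_).congr_right ?_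
  · filter_upwards with N
    intro x hx
    simp only [Pi.add_apply, cseq, dg, Finset.sum_sub_distrib]
    ring
  · intro x hx
    rfl

lemma tlu_d2 : TendstoLocallyUniformlyOn (fun N x => d2 N x) T atTop (Ioi (0:ℝ)) := by
  apply tlu_of_icc
  intro a b ha ha1
  exact tuo_d2 ha ha1

lemma tlu_d3 : TendstoLocallyUniformlyOn (fun N x => d3 N x) (fun x => -2 * U x) atTop
    (Ioi (0:ℝ)) := by
  apply tlu_of_icc
  intro a b ha ha1
  apply (tuo_d3 ha ha1).congr_right
  intro x hx
  simp only [U]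
  rw [← tsum_mul_left]
  exact tsum_congr fun k => by ring

lemma hasDerivAt_logGamma {x : ℝ} (hx : 0 < x) :
    HasDerivAt (fun t => Real.log (Real.Gamma t)) (psi x) x :=
  hasDerivAt_of_tendstoLocallyUniformlyOn isOpen_Ioi tlu_dg
    (Eventually.of_forall fun N y hy => hasDerivAt_lg N hy)
    (fun y hy => tendsto_lg hy) hx

lemma digamma_eq {x : ℝ} (hx : 0 < x) : digamma x = psi x :=
  (hasDerivAt_logGamma hx).deriv

lemma hasDerivAt_psi {x : ℝ} (hx : 0 < x) : HasDerivAt psi (T x) x :=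
  hasDerivAt_of_tendstoLocallyUniformlyOn isOpen_Ioi tlu_d2
    (Eventually.of_forall fun N y hy => hasDerivAt_dg N hy)
    (fun y hy => tlu_dg.tendsto_at hy) hx

lemma hasDerivAt_digamma {x : ℝ} (hx : 0 < x) : HasDerivAt digamma (T x) x := by
  apply (hasDerivAt_psi hx).congr_of_eventuallyEq
  filter_upwards [isOpen_Ioi.mem_nhds hx] with y hy
  exact digamma_eq hy

lemma hasDerivAt_T {x : ℝ} (hx : 0 < x) : HasDerivAt T (-2 * U x) x :=
  hasDerivAt_of_tendstoLocallyUniformlyOn isOpen_Ioi tlu_d3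
    (Eventually.of_forall fun N y hy => hasDerivAt_d2 N hy)
    (fun y hy => tlu_d2.tendsto_at hy) hx

lemma hasDerivAt_logGamma' {x : ℝ} (hx : 0 < x) :
    HasDerivAt (fun t => Real.log (Real.Gamma t)) (digamma x) x := by
  rw [digamma_eq hx]; exact hasDerivAt_logGamma hx

lemma u_anti : StrictAntiOn (fun y => y * T y) (Ioi (0:ℝ)) := by
  apply strictAntiOn_of_deriv_neg (convex_Ioi 0)
  · intro y hy
    exact ((hasDerivAt_id y).mul (hasDerivAt_T hy)).continuousAt.continuousWithinAt
  · intro y hy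
    rw [interior_Ioi] at hy
    have h : HasDerivAt (fun y => y * T y) (1 * T y + y * (-2 * U y)) y :=
      (hasDerivAt_id y).mul (hasDerivAt_T hy)
    rw [h.deriv]
    have := TU_neg hy
    nlinarith [this]

lemma T_superadd {x y : ℝ} (hx : 0 < x) (hy : 0 < y) :
    T (x + y) * (T x + T y) < T x * T y := by
  have hxy : (0:ℝ) < x + y := by linarith
  have h1 : (x + y) * T (x + y) < x * T x :=
    u_anti (mem_Ioi.2 hx) (mem_Ioi.2 hxy) (by linarith)
  have h2 : (x + y) * T (x + y) < y * T y :=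
    u_anti (mem_Ioi.2 hy) (mem_Ioi.2 hxy) (by linarith)
  have hTx := T_pos hx
  have hTy := T_pos hy
  have hTs := T_pos hxy
  have e1 : ((x + y) * T (x + y)) * T y < (x * T x) * T y := by
    exact mul_lt_mul_of_pos_right h1 hTy
  have e2 : ((x + y) * T (x + y)) * T x < (y * T y) * T x := by
    exact mul_lt_mul_of_pos_right h2 hTx
  rw [← mul_lt_mul_iff_right₀ hxy]
  nlinarith [e1, e2]

lemma quadform {x y v w : ℝ} (hx : 0 < x) (hy : 0 < y) (hvw : v ≠ 0 ∨ w ≠ 0) :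
    T (x + y) * (v + w) ^ 2 < T x * v ^ 2 + T y * w ^ 2 := by
  have hTx := T_pos hx
  have hTy := T_pos hy
  have hsup := T_superadd hx hy
  rcases eq_or_ne (v + w) 0 with h0 | h0
  · rw [h0]
    have hv : v ≠ 0 := by
      rcases hvw with h | h
      · exact h
      · intro hv0; apply h; linarith [hv0 ▸ h0]
    have hw : w ≠ 0 := by intro hw0; apply hv; linarith [hw0 ▸ h0]
    have : 0 < T x * v ^ 2 + T y * w ^ 2 := by positivity
    simpa using this
  · have key : (T x * T y) * (v + w) ^ 2 ≤ (T x + T y) * (T x * v ^ 2 + T y * w ^ 2) := by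
      nlinarith [sq_nonneg (T x * v - T y * w), mul_pos hTx hTy]
    have step : (T (x + y) * (T x + T y)) * (v + w) ^ 2 < (T x * T y) * (v + w) ^ 2 :=
      mul_lt_mul_of_pos_right hsup (by positivity)
    have hTxy : 0 < T x + T y := by linarith
    rw [← mul_lt_mul_iff_right₀ hTxy]
    nlinarith [key, step]

noncomputable def f (x : ℝ) : ℝ := Real.log (Real.Gamma x)
noncomputable def D (b a : ℝ) : ℝ := f b - f a - (b - a) * digamma a

lemma D_self (a : ℝ) : D a a = 0 := by simp [D]

lemma seg_pos {a b t : ℝ} (ha : 0 < a) (hb : 0 < b) (h0 : 0 ≤ t) (h1 : t ≤ 1) :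
    0 < a + t * (b - a) := by
  rcases le_total a b with h | h
  · nlinarith
  · nlinarith

lemma E2_pos {a1 a2 b1 b2 : ℝ} (ha1 : 0 < a1) (ha2 : 0 < a2) (hb1 : 0 < b1) (hb2 : 0 < b2)
    (hne : ¬(b1 = a1 ∧ b2 = a2)) :
    0 < D b1 a1 + D b2 a2 - D (b1 + b2) (a1 + a2) := by
  set v1 := b1 - a1 with hv1
  set v2 := b2 - a2 with hv2
  have hvne : v1 ≠ 0 ∨ v2 ≠ 0 := by
    by_contra hcon
    push_neg at hcon
    have e1 : b1 - a1 = 0 := hcon.1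
    have e2 : b2 - a2 = 0 := hcon.2
    exact hne ⟨by linarith, by linarith⟩
  set h : ℝ → ℝ := fun t => f (a1 + t * v1) + f (a2 + t * v2) - f ((a1 + a2) + t * (v1 + v2))
    with hdef
  set h1 : ℝ → ℝ := fun t => v1 * digamma (a1 + t * v1) + v2 * digamma (a2 + t * v2)
    - (v1 + v2) * digamma ((a1 + a2) + t * (v1 + v2)) with h1def
  -- positivity of the three arguments on [0,1]
  have hp1 : ∀ t ∈ Icc (0:ℝ) 1, 0 < a1 + t * v1 := fun t ht => seg_pos ha1 hb1 ht.1 ht.2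
  have hp2 : ∀ t ∈ Icc (0:ℝ) 1, 0 < a2 + t * v2 := fun t ht => seg_pos ha2 hb2 ht.1 ht.2
  have hps : ∀ t ∈ Icc (0:ℝ) 1, 0 < (a1 + a2) + t * (v1 + v2) := by
    intro t ht
    have e : (a1 + a2) + t * (v1 + v2) = (a1 + t * v1) + (a2 + t * v2) := by ring
    rw [e]
    exact add_pos (hp1 t ht) (hp2 t ht)
  -- derivative of h
  have hd : ∀ t ∈ Icc (0:ℝ) 1, HasDerivAt h (h1 t) t := by
    intro t ht
    have i1 : HasDerivAt (fun s : ℝ => a1 + s * v1) v1 t := by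
      simpa using (hasDerivAt_mul_const v1).const_add a1
    have i2 : HasDerivAt (fun s : ℝ => a2 + s * v2) v2 t := by
      simpa using (hasDerivAt_mul_const v2).const_add a2
    have i3 : HasDerivAt (fun s : ℝ => (a1 + a2) + s * (v1 + v2)) (v1 + v2) t := by
      simpa using (hasDerivAt_mul_const (v1 + v2)).const_add (a1 + a2)
    have o1 := (hasDerivAt_logGamma' (hp1 t ht)).comp t i1
    have o2 := (hasDerivAt_logGamma' (hp2 t ht)).comp t i2
    have o3 := (hasDerivAt_logGamma' (hps t ht)).comp t i3
    have := (o1.fun_add o2).fun_sub o3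
    convert this using 1
    exacts [rfl, rfl, rfl, by ring]
  -- derivative of h1
  have hd1 : ∀ t ∈ Icc (0:ℝ) 1, HasDerivAt h1
      (v1 ^ 2 * T (a1 + t * v1) + v2 ^ 2 * T (a2 + t * v2)
        - (v1 + v2) ^ 2 * T ((a1 + a2) + t * (v1 + v2))) t := by
    intro t ht
    have i1 : HasDerivAt (fun s : ℝ => a1 + s * v1) v1 t := by
      simpa using (hasDerivAt_mul_const v1).const_add a1
    have i2 : HasDerivAt (fun s : ℝ => a2 + s * v2) v2 t := by
      simpa using (hasDerivAt_mul_const v2).const_add a2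
    have i3 : HasDerivAt (fun s : ℝ => (a1 + a2) + s * (v1 + v2)) (v1 + v2) t := by
      simpa using (hasDerivAt_mul_const (v1 + v2)).const_add (a1 + a2)
    have o1 := ((hasDerivAt_digamma (hp1 t ht)).comp t i1).const_mul v1
    have o2 := ((hasDerivAt_digamma (hp2 t ht)).comp t i2).const_mul v2
    have o3 := ((hasDerivAt_digamma (hps t ht)).comp t i3).const_mul (v1 + v2)
    have := (o1.fun_add o2).fun_sub o3
    convert this using 1
    exacts [rfl, rfl, rfl, by ring]
  -- h1 has positive derivative on [0,1], hence strictly monotone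
  have hq : ∀ t ∈ Icc (0:ℝ) 1, 0 < v1 ^ 2 * T (a1 + t * v1) + v2 ^ 2 * T (a2 + t * v2)
      - (v1 + v2) ^ 2 * T ((a1 + a2) + t * (v1 + v2)) := by
    intro t ht
    have e : (a1 + a2) + t * (v1 + v2) = (a1 + t * v1) + (a2 + t * v2) := by ring
    rw [e]
    have := quadform (hp1 t ht) (hp2 t ht) hvne
    nlinarith [this]
  have hmono : StrictMonoOn h1 (Icc (0:ℝ) 1) := by
    apply strictMonoOn_of_deriv_pos (convex_Icc 0 1)
    · intro t ht
      exact (hd1 t ht).continuousAt.continuousWithinAt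
    · intro t ht
      rw [interior_Icc] at ht
      rw [(hd1 t (Ioo_subset_Icc_self ht)).deriv]
      exact hq t (Ioo_subset_Icc_self ht)
  -- mean value theorem
  have hcont : ContinuousOn h (Icc 0 1) := fun t ht => (hd t ht).continuousAt.continuousWithinAt
  obtain ⟨c, hc, hceq⟩ := exists_hasDerivAt_eq_slope h h1 one_pos hcont
    (fun t ht => hd t (Ioo_subset_Icc_self ht))
  have hlt : h1 0 < h1 c := hmono (left_mem_Icc.2 zero_le_one) (Ioo_subset_Icc_self hc) hc.1
  have hslope : h1 c = h 1 - h 0 := by rw [hceq]; simp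
  -- identify the Bregman expression
  have hfinal : D b1 a1 + D b2 a2 - D (b1 + b2) (a1 + a2) = h 1 - h 0 - h1 0 := by
    simp only [hdef, h1def, D, f]
    rw [show a1 + 1 * v1 = b1 by rw [hv1]; ring, show a2 + 1 * v2 = b2 by rw [hv2]; ring,
      show (a1 + a2) + 1 * (v1 + v2) = b1 + b2 by rw [hv1, hv2]; ring,
      show a1 + 0 * v1 = a1 by ring, show a2 + 0 * v2 = a2 by ring,
      show (a1 + a2) + 0 * (v1 + v2) = a1 + a2 by ring]
    rw [hv1, hv2]
    ring
  rw [hfinal]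
  linarith [hlt, hslope.symm.le]

lemma E2_nonneg {a1 a2 b1 b2 : ℝ} (ha1 : 0 < a1) (ha2 : 0 < a2) (hb1 : 0 < b1) (hb2 : 0 < b2) :
    0 ≤ D b1 a1 + D b2 a2 - D (b1 + b2) (a1 + a2) := by
  by_cases hne : b1 = a1 ∧ b2 = a2
  · rw [hne.1, hne.2, D_self, D_self, D_self]
    norm_num
  · exact (E2_pos ha1 ha2 hb1 hb2 hne).le

lemma E2_eq_zero {a1 a2 b1 b2 : ℝ} (ha1 : 0 < a1) (ha2 : 0 < a2) (hb1 : 0 < b1) (hb2 : 0 < b2)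
    (h0 : D b1 a1 + D b2 a2 - D (b1 + b2) (a1 + a2) = 0) : b1 = a1 ∧ b2 = a2 := by
  by_contra hne
  exact absurd h0 (E2_pos ha1 ha2 hb1 hb2 hne).ne'

noncomputable def KL {m : ℕ} (α β : Fin m → ℝ) : ℝ :=
  (∑ i, D (β i) (α i)) - D (∑ i, β i) (∑ i, α i)

lemma KL_main : ∀ (m : ℕ) (α β : Fin (m + 1) → ℝ), (∀ i, 0 < α i) → (∀ i, 0 < β i) →
    0 ≤ KL α β ∧ (KL α β = 0 → m = 0 ∨ α = β) := by
  intro m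
  induction m with
  | zero =>
    intro α β hα hβ
    constructor
    · simp [KL]
    · exact fun _ => Or.inl rfl
  | succ m ih =>
    intro α β hα hβ
    set α' : Fin (m + 1) → ℝ := fun i => α i.succ with hα'
    set β' : Fin (m + 1) → ℝ := fun i => β i.succ with hβ'
    have hα'pos : ∀ i, 0 < α' i := fun i => hα i.succ
    have hβ'pos : ∀ i, 0 < β' i := fun i => hβ i.succ
    have hsA : 0 < ∑ i, α' i := Finset.sum_pos (fun i _ => hα'pos i) Finset.univ_nonempty
    have hsB : 0 < ∑ i, β' i := Finset.sum_pos (fun i _ => hβ'pos i) Finset.univ_nonempty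
    have hsplit : KL α β =
        (D (β 0) (α 0) + D (∑ i, β' i) (∑ i, α' i) - D (β 0 + ∑ i, β' i) (α 0 + ∑ i, α' i))
          + KL α' β' := by
      simp only [KL, Fin.sum_univ_succ]
      ring
    have hE2 := E2_nonneg (hα 0) hsA (hβ 0) hsB
    have hih := ih α' β' hα'pos hβ'pos
    constructor
    · rw [hsplit]; linarith [hih.1]
    · intro h0
      right
      rw [hsplit] at h0
      have hz1 : D (β 0) (α 0) + D (∑ i, β' i) (∑ i, α' i)
          - D (β 0 + ∑ i, β' i) (α 0 + ∑ i, α' i) = 0 := by linarith [hih.1]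
      have hz2 : KL α' β' = 0 := by linarith [hih.1]
      obtain ⟨hhead, hsum⟩ := E2_eq_zero (hα 0) hsA (hβ 0) hsB hz1
      have htail : α' = β' := by
        rcases hih.2 hz2 with hm | heq
        · subst hm
          funext i
          have : Subsingleton (Fin 1) := by infer_instance
          have hi : i = 0 := Subsingleton.elim i 0
          subst hi
          have e1 : ∑ i : Fin 1, α' i = α' 0 := by simp
          have e2 : ∑ i : Fin 1, β' i = β' 0 := by simp
          rw [e1, e2] at hsum
          exact hsum.symm
        · exact heq
      funext i
      rcases Fin.eq_zero_or_eq_succ i with rfl | ⟨j, rfl⟩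
      · exact hhead.symm
      · exact congrFun htail j

end DKL

/-- Self-identification: the closed-form Dirichlet Kullback–Leibler divergence
vanishes iff the parameter vectors coincide. -/
theorem dirichlet_kl_eq_zero_iff (n : ℕ) (hn : 1 ≤ n) (α β : Fin (n + 1) → ℝ)
    (hα : ∀ i, 0 < α i) (hβ : ∀ i, 0 < β i) :
    Real.log (Real.Gamma (∑ i, α i) / Real.Gamma (∑ i, β i))
        + ∑ i, Real.log (Real.Gamma (β i) / Real.Gamma (α i))
        + ∑ i, (α i - β i) * (digamma (α i) - digamma (∑ i, α i)) = 0
      ↔ α = β := by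
  have hsA : 0 < ∑ i, α i := Finset.sum_pos (fun i _ => hα i) Finset.univ_nonempty
  have hsB : 0 < ∑ i, β i := Finset.sum_pos (fun i _ => hβ i) Finset.univ_nonempty
  have hΓA : Real.Gamma (∑ i, α i) ≠ 0 := (Real.Gamma_pos_of_pos hsA).ne'
  have hΓB : Real.Gamma (∑ i, β i) ≠ 0 := (Real.Gamma_pos_of_pos hsB).ne'
  have hexpr : Real.log (Real.Gamma (∑ i, α i) / Real.Gamma (∑ i, β i))
        + ∑ i, Real.log (Real.Gamma (β i) / Real.Gamma (α i))
        + ∑ i, (α i - β i) * (digamma (α i) - digamma (∑ i, α i)) = DKL.KL α β := by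
    rw [Real.log_div hΓA hΓB]
    rw [Finset.sum_congr rfl (fun i _ => Real.log_div (Real.Gamma_pos_of_pos (hβ i)).ne'
      (Real.Gamma_pos_of_pos (hα i)).ne')]
    simp only [DKL.KL, DKL.D, DKL.f, sub_mul, mul_sub, Finset.sum_sub_distrib]
    rw [← Finset.sum_mul, ← Finset.sum_mul]
    ring
  rw [hexpr]
  constructor
  · intro h0
    rcases (DKL.KL_main n α β hα hβ).2 h0 with hm | heq
    · omega
    · exact heq
  · rintro rfl
    simp [DKL.KL, DKL.D_self]
end

section
/- Let (X, 𝒜, μ) be a probability space, ι a nonempty finite index type, g : ι → X → ℝ measurable functions with g b x > 0 for μ-a.e. x, and ω : ι → ℝ with ω b > 0 for all b and ∑ b, ω b = 1. Assume that for each b the function x ↦ log (g b x) is μ-integrable, and set c b = ∫ log (g b x) dμ(x). Then the supremum over positive probability vectors φ (φ b > 0, ∑ b, φ b = 1) of ℒ(φ) = ∑ b, φ b · ∫ log (ω b · g b x / φ b) dμ(x) equals log (∑ b, ω b · Real.exp (c b)), and it is attained at φ̂ b = ω b · Real.exp (c b) / ∑ b', ω b' · Real.exp (c b'). -/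
open MeasureTheory

/-- Optimal variational parameters: the supremum, over positive probability vectors `φ`,
of the variational lower bound `ℒ(φ) = ∑ b, φ b * ∫ log (ω b * g b x / φ b) dμ` equals
`log (∑ b, ω b * exp (c b))` with `c b = ∫ log (g b x) dμ`, and it is attained at
`φ̂ b = ω b * exp (c b) / ∑ b', ω b' * exp (c b')`. -/
theorem variational_bound_isGreatest {X : Type*} [MeasurableSpace X]
    (μ : Measure X) [IsProbabilityMeasure μ]
    {ι : Type*} [Fintype ι] [Nonempty ι]
    (g : ι → X → ℝ) (hgmeas : ∀ b, Measurable (g b))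
    (hgpos : ∀ b, ∀ᵐ x ∂μ, 0 < g b x)
    (ω : ι → ℝ) (hω : ∀ b, 0 < ω b) (hωsum : ∑ b, ω b = 1)
    (hint : ∀ b, Integrable (fun x => Real.log (g b x)) μ)
    (c : ι → ℝ) (hc : ∀ b, c b = ∫ x, Real.log (g b x) ∂μ) :
    IsGreatest
        {r : ℝ | ∃ φ : ι → ℝ, (∀ b, 0 < φ b) ∧ ∑ b, φ b = 1 ∧
          r = ∑ b, φ b * ∫ x, Real.log (ω b * g b x / φ b) ∂μ}
        (Real.log (∑ b, ω b * Real.exp (c b))) ∧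
      ∑ b, (ω b * Real.exp (c b) / ∑ b', ω b' * Real.exp (c b')) *
          ∫ x, Real.log (ω b * g b x /
            (ω b * Real.exp (c b) / ∑ b', ω b' * Real.exp (c b'))) ∂μ
        = Real.log (∑ b, ω b * Real.exp (c b)) := by
  set a : ι → ℝ := fun b => ω b * Real.exp (c b) with ha_def
  have ha : ∀ b, 0 < a b := fun b => mul_pos (hω b) (Real.exp_pos _)
  set S : ℝ := ∑ b, a b with hS
  have hSpos : 0 < S := Finset.sum_pos (fun b _ => ha b) Finset.univ_nonempty
  -- the integral identity
  have key : ∀ (t : ℝ) (b : ι), 0 < t →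
      ∫ x, Real.log (ω b * g b x / t) ∂μ = Real.log (a b / t) := by
    intro t b ht
    have hcong : (fun x => Real.log (ω b * g b x / t)) =ᵐ[μ]
        (fun x => Real.log (ω b / t) + Real.log (g b x)) := by
      filter_upwards [hgpos b] with x hx
      rw [div_eq_mul_inv, mul_right_comm, Real.log_mul (mul_pos (hω b) (inv_pos.mpr ht)).ne' hx.ne',
        ← div_eq_mul_inv]
    rw [integral_congr_ae hcong, integral_add (integrable_const _) (hint b),
      integral_const, probReal_univ, smul_eq_mul, one_mul, ← hc b,
      Real.log_div (hω b).ne' ht.ne']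
    have : Real.log (a b / t) = Real.log (ω b) + c b - Real.log t := by
      rw [Real.log_div (ha b).ne' ht.ne', ha_def,
        Real.log_mul (hω b).ne' (Real.exp_pos _).ne', Real.log_exp]
    rw [this]; ring
  -- the attained value at φ̂ b = a b / S
  have hmem : ∑ b, (a b / S) * ∫ x, Real.log (ω b * g b x / (a b / S)) ∂μ
      = Real.log S := by
    have heach : ∀ b : ι, (a b / S) * ∫ x, Real.log (ω b * g b x / (a b / S)) ∂μ
        = (a b / S) * Real.log S := by
      intro b
      rw [key (a b / S) b (div_pos (ha b) hSpos)]
      congr 2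
      rw [div_div_eq_mul_div, mul_div_cancel_left₀ S (ha b).ne']
    rw [Finset.sum_congr rfl (fun b _ => heach b), ← Finset.sum_mul,
      ← Finset.sum_div, ← hS, div_self hSpos.ne', one_mul]
  refine ⟨⟨⟨fun b => a b / S, fun b => div_pos (ha b) hSpos, ?_, hmem.symm⟩, ?_⟩, hmem⟩
  · rw [← Finset.sum_div, ← hS, div_self hSpos.ne']
  -- upper bound
  rintro r ⟨φ, hφpos, hφsum, rfl⟩
  have hval : ∀ b : ι, φ b * ∫ x, Real.log (ω b * g b x / φ b) ∂μ
      = φ b * Real.log (a b / φ b) := fun b => by rw [key (φ b) b (hφpos b)]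
  rw [Finset.sum_congr rfl (fun b _ => hval b)]
  have hconc := strictConcaveOn_log_Ioi.concaveOn
  have hjensen := hconc.le_map_sum (t := Finset.univ) (w := φ) (p := fun b => a b / φ b)
    (fun b _ => (hφpos b).le) hφsum
    (fun b _ => Set.mem_Ioi.mpr (div_pos (ha b) (hφpos b)))
  simp only [smul_eq_mul] at hjensen
  have hsum : ∑ b, φ b * (a b / φ b) = S := by
    rw [hS]
    exact Finset.sum_congr rfl fun b _ => mul_div_cancel₀ _ (hφpos b).ne'
  rw [hsum] at hjensen
  exact le_of_le_of_eq hjensen rfl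
end

section
/- (Proposition: variational KL approximation for mixtures.) Let (X, 𝒜, ν) be a σ-finite measure space. Let k, m ≥ 1, let f : Fin k → X → ℝ and g : Fin m → X → ℝ be measurable with f a x > 0 and g b x > 0 for ν-a.e. x and ∫ f a dν = 1, ∫ g b dν = 1 for all a, b. Let π : Fin k → ℝ and ω : Fin m → ℝ satisfy π a > 0, ω b > 0, ∑ a, π a = 1, ∑ b, ω b = 1. Assume that for all a, a', b the functions x ↦ f a x · log (f a' x) and x ↦ f a x · log (g b x) are ν-integrable. Define D(u, v) = ∫ u x · log (u x / v x) dν(x), the optimal variational parameters ψ̂(a', a) = π a' · Real.exp (−D(f a, f a')) / ∑ â, π â · Real.exp (−D(f a, f â)) and φ̂(b, a) = ω b · Real.exp (−D(f a, g b)) / ∑ b', ω b' · Real.exp (−D(f a, g b')), and the bounds ℒ_ff = ∑ a, π a · ∑ a', ψ̂(a', a) · ∫ f a x · log (π a' · f a' x / ψ̂(a', a)) dν(x) and ℒ_fg = ∑ a, π a · ∑ b, φ̂(b, a) · ∫ f a x · log (ω b · g b x / φ̂(b, a)) dν(x). Then ℒ_ff − ℒ_fg = ∑ a, π a · log ((∑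 a', π a' · Real.exp (−D(f a, f a'))) / (∑ b, ω b · Real.exp (−D(f a, g b)))). -/
open MeasureTheory

lemma vkl_integral_log_mul_div {X : Type*} [MeasurableSpace X] (ν : Measure X)
    (u h : X → ℝ) (hu : Integrable u ν)
    (huh : Integrable (fun x => u x * Real.log (h x)) ν)
    (hpos : ∀ᵐ x ∂ν, 0 < h x) (c d : ℝ) (hc : 0 < c) (hd : 0 < d) :
    ∫ x, u x * Real.log (c * h x / d) ∂ν =
      (∫ x, u x * Real.log (h x) ∂ν) + Real.log (c / d) * ∫ x, u x ∂ν := by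
  have h1 : ∫ x, u x * Real.log (c * h x / d) ∂ν
      = ∫ x, (u x * Real.log (h x) + Real.log (c / d) * u x) ∂ν := by
    apply integral_congr_ae
    filter_upwards [hpos] with x hx
    rw [show c * h x / d = h x * (c / d) by ring,
      Real.log_mul hx.ne' (by positivity)]
    ring
  rw [h1, integral_add huh (hu.const_mul _), integral_const_mul]

lemma vkl_D_eq {X : Type*} [MeasurableSpace X] (ν : Measure X)
    (u h : X → ℝ)
    (huu : Integrable (fun x => u x * Real.log (u x)) ν)
    (huh : Integrable (fun x => u x * Real.log (h x)) ν)
    (hupos : ∀ᵐ x ∂ν, 0 < u x) (hpos : ∀ᵐ x ∂ν, 0 < h x) :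
    ∫ x, u x * Real.log (u x / h x) ∂ν =
      (∫ x, u x * Real.log (u x) ∂ν) - ∫ x, u x * Real.log (h x) ∂ν := by
  have h1 : ∫ x, u x * Real.log (u x / h x) ∂ν
      = ∫ x, (u x * Real.log (u x) - u x * Real.log (h x)) ∂ν := by
    apply integral_congr_ae
    filter_upwards [hupos, hpos] with x hx1 hx2
    rw [Real.log_div hx1.ne' hx2.ne']
    ring
  rw [h1, integral_sub huu huh]

lemma vkl_inner {X : Type*} [MeasurableSpace X] (ν : Measure X)
    (n : ℕ) (hn : 1 ≤ n)
    (u : X → ℝ) (h : Fin n → X → ℝ) (q : Fin n → ℝ) (hq : ∀ b, 0 < q b)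
    (hu : Integrable u ν) (huone : ∫ x, u x ∂ν = 1)
    (huu : Integrable (fun x => u x * Real.log (u x)) ν)
    (huh : ∀ b, Integrable (fun x => u x * Real.log (h b x)) ν)
    (hupos : ∀ᵐ x ∂ν, 0 < u x) (hpos : ∀ b, ∀ᵐ x ∂ν, 0 < h b x)
    (Dv : Fin n → ℝ) (hDv : ∀ b, Dv b = ∫ x, u x * Real.log (u x / h b x) ∂ν)
    (φ : Fin n → ℝ)
    (hφ : ∀ b, φ b = q b * Real.exp (-(Dv b)) / ∑ b', q b' * Real.exp (-(Dv b'))) :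
    ∑ b, φ b * ∫ x, u x * Real.log (q b * h b x / φ b) ∂ν
      = Real.log (∑ b', q b' * Real.exp (-(Dv b'))) +
        ∫ x, u x * Real.log (u x) ∂ν := by
  haveI : NeZero n := ⟨by omega⟩
  set S : ℝ := ∑ b', q b' * Real.exp (-(Dv b')) with hS
  have hSpos : 0 < S := by
    exact Finset.sum_pos (fun b _ => mul_pos (hq b) (Real.exp_pos _)) Finset.univ_nonempty
  have hφpos : ∀ b, 0 < φ b := by
    intro b; rw [hφ b]; exact div_pos (mul_pos (hq b) (Real.exp_pos _)) hSpos
  have hφsum : ∑ b, φ b = 1 := by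
    simp only [hφ]
    rw [← Finset.sum_div, div_self hSpos.ne']
  have hterm : ∀ b, ∫ x, u x * Real.log (q b * h b x / φ b) ∂ν
      = Real.log S + ∫ x, u x * Real.log (u x) ∂ν := by
    intro b
    rw [vkl_integral_log_mul_div ν u (h b) hu (huh b) (hpos b) (q b) (φ b)
      (hq b) (hφpos b), huone, mul_one]
    have hqφ : q b / φ b = S * Real.exp (Dv b) := by
      rw [hφ b, Real.exp_neg]
      have e := Real.exp_ne_zero (Dv b)
      field_simp [(hq b).ne']
    rw [hqφ, Real.log_mul hSpos.ne' (Real.exp_ne_zero _), Real.log_exp,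
      hDv b, vkl_D_eq ν u (h b) huu (huh b) hupos (hpos b)]
    ring
  calc ∑ b, φ b * ∫ x, u x * Real.log (q b * h b x / φ b) ∂ν
      = ∑ b, φ b * (Real.log S + ∫ x, u x * Real.log (u x) ∂ν) := by
        exact Finset.sum_congr rfl (fun b _ => by rw [hterm b])
    _ = (∑ b, φ b) * (Real.log S + ∫ x, u x * Real.log (u x) ∂ν) := by
        rw [Finset.sum_mul]
    _ = _ := by rw [hφsum, one_mul]

/-- Proposition: the variational approximation of the Kullback–Leibler divergence between
two mixtures `f = ∑ a, p a • f a` and `g = ∑ b, w b • g b` has the closed form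
`ℒ_f(f, ψ̂) − ℒ_f(g, φ̂) = ∑ a, p a * log ((∑ a', p a' * exp (−D(f a‖f a'))) /
(∑ b, w b * exp (−D(f a‖g b))))`. -/
theorem variational_kl_mixture {X : Type*} [MeasurableSpace X]
    (ν : Measure X) [SigmaFinite ν]
    (k m : ℕ) (hk : 1 ≤ k) (hm : 1 ≤ m)
    (f : Fin k → X → ℝ) (g : Fin m → X → ℝ)
    (hfmeas : ∀ a, Measurable (f a)) (hgmeas : ∀ b, Measurable (g b))
    (hfpos : ∀ a, ∀ᵐ x ∂ν, 0 < f a x) (hgpos : ∀ b, ∀ᵐ x ∂ν, 0 < g b x)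
    (hfone : ∀ a, ∫ x, f a x ∂ν = 1) (hgone : ∀ b, ∫ x, g b x ∂ν = 1)
    (p : Fin k → ℝ) (w : Fin m → ℝ)
    (hp : ∀ a, 0 < p a) (hw : ∀ b, 0 < w b)
    (hpsum : ∑ a, p a = 1) (hwsum : ∑ b, w b = 1)
    (hintff : ∀ a a', Integrable (fun x => f a x * Real.log (f a' x)) ν)
    (hintfg : ∀ a b, Integrable (fun x => f a x * Real.log (g b x)) ν)
    -- the component Kullback–Leibler divergence
    (D : (X → ℝ) → (X → ℝ) → ℝ)
    (hD : ∀ u v, D u v = ∫ x, u x * Real.log (u x / v x) ∂ν)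
    -- the optimal variational parameters
    (ψhat : Fin k → Fin k → ℝ)
    (hψhat : ∀ a' a, ψhat a' a =
      p a' * Real.exp (-(D (f a) (f a'))) / ∑ a2, p a2 * Real.exp (-(D (f a) (f a2))))
    (φhat : Fin m → Fin k → ℝ)
    (hφhat : ∀ b a, φhat b a =
      w b * Real.exp (-(D (f a) (g b))) / ∑ b', w b' * Real.exp (-(D (f a) (g b'))))
    -- the optimized variational lower bounds ℒ_f(f, ψ̂) and ℒ_f(g, φ̂)
    (Lff Lfg : ℝ)
    (hLff : Lff = ∑ a, p a * ∑ a', ψhat a' a *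
      ∫ x, f a x * Real.log (p a' * f a' x / ψhat a' a) ∂ν)
    (hLfg : Lfg = ∑ a, p a * ∑ b, φhat b a *
      ∫ x, f a x * Real.log (w b * g b x / φhat b a) ∂ν) :
    Lff - Lfg = ∑ a, p a * Real.log
      ((∑ a', p a' * Real.exp (-(D (f a) (f a')))) /
        (∑ b, w b * Real.exp (-(D (f a) (g b))))) := by
  haveI : NeZero k := ⟨by omega⟩
  haveI : NeZero m := ⟨by omega⟩
  have hfint : ∀ a, Integrable (f a) ν := by
    intro a; by_contra hc
    have h1 := hfone a
    rw [integral_undef hc] at h1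
    norm_num at h1
  have hSfpos : ∀ a, 0 < ∑ a', p a' * Real.exp (-(D (f a) (f a'))) := fun a =>
    Finset.sum_pos (fun a' _ => mul_pos (hp a') (Real.exp_pos _)) Finset.univ_nonempty
  have hSgpos : ∀ a, 0 < ∑ b, w b * Real.exp (-(D (f a) (g b))) := fun a =>
    Finset.sum_pos (fun b _ => mul_pos (hw b) (Real.exp_pos _)) Finset.univ_nonempty
  have hff : ∀ a, ∑ a', ψhat a' a *
      ∫ x, f a x * Real.log (p a' * f a' x / ψhat a' a) ∂ν
      = Real.log (∑ a', p a' * Real.exp (-(D (f a) (f a')))) +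
        ∫ x, f a x * Real.log (f a x) ∂ν := by
    intro a
    exact vkl_inner ν k hk (f a) f p hp (hfint a) (hfone a) (hintff a a) (hintff a)
      (hfpos a) hfpos (fun a' => D (f a) (f a')) (fun a' => hD _ _)
      (fun a' => ψhat a' a) (fun a' => hψhat a' a)
  have hfg : ∀ a, ∑ b, φhat b a *
      ∫ x, f a x * Real.log (w b * g b x / φhat b a) ∂ν
      = Real.log (∑ b, w b * Real.exp (-(D (f a) (g b)))) +
        ∫ x, f a x * Real.log (f a x) ∂ν := by
    intro a
    exact vkl_inner ν m hm (f a) g w hw (hfint a) (hfone a) (hintff a a) (hintfg a)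
      (hfpos a) hgpos (fun b => D (f a) (g b)) (fun b => hD _ _)
      (fun b => φhat b a) (fun b => hφhat b a)
  rw [hLff, hLfg, ← Finset.sum_sub_distrib]
  refine Finset.sum_congr rfl (fun a _ => ?_)
  rw [hff a, hfg a, Real.log_div (hSfpos a).ne' (hSgpos a).ne']
  ring
end
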